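/- arXiv:1901.03155 — 4 statements merged into one kernel-verified Lean document; each statement's English description precedes it below -/
import Mathlib

section
/- For every tree process P and every n ≥ 1, the sum over all contexts c with |c| = n of Prob_P(c) is at most n+1. -/
/-- Labelled binary trees over an alphabet `A`. -/
inductive BTree (A : Type*) : Type _
  | leaf : A → BTree A
  | node : A → BTree A → BTree A → BTree A

/-- The number of leaves of a labelled binary tree. -/
def BTree.numLeaves {A : Type*} : BTree A → ℕ
  | .leaf _ => 1
  | .node _ l r => l.numLeaves + r.numLeaves

/-- Contexts over `A`: binary trees with one parameter leaf.  `Ctx.left a c t`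
denotes `a(c, t)`, `Ctx.right a t c` denotes `a(t, c)`. -/
inductive Ctx (A : Type*) : Type _
  | hole : Ctx A
  | left : A → Ctx A → BTree A → Ctx A
  | right : A → BTree A → Ctx A → Ctx A

/-- The size of a context: its number of leaves, not counting the parameter. -/
def Ctx.size {A : Type*} : Ctx A → ℕ
  | .hole => 0
  | .left _ c t => c.size + t.numLeaves
  | .right _ t c => t.numLeaves + c.size

/-- Histories (label/direction words), `false` = left, `true` = right. -/
abbrev History (A : Type*) := List (A × Bool)

/-- `Prob_P(t)` for a tree process `P`, with `z` the history of the root. -/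
def treeProb {A : Type*} (P : History A → A × Bool → ℝ) :
    History A → BTree A → ℝ
  | z, .leaf a => P z (a, false)
  | z, .node a l r =>
      P z (a, true) * treeProb P (z ++ [(a, false)]) l *
        treeProb P (z ++ [(a, true)]) r

/-- `Prob_P(c)` for a context `c`: the product of `P_{h(v)}(λ(v))` over all
nodes of `c` except the parameter node. -/
def ctxProb {A : Type*} (P : History A → A × Bool → ℝ) :
    History A → Ctx A → ℝ
  | _, .hole => 1
  | z, .left a c t =>
      P z (a, true) * ctxProb P (z ++ [(a, false)]) c *
        treeProb P (z ++ [(a, true)]) t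
  | z, .right a t c =>
      P z (a, true) * treeProb P (z ++ [(a, false)]) t *
        ctxProb P (z ++ [(a, true)]) c
namespace TreeProc

open Function

variable {A : Type*} [Fintype A]

/-- Real-valued indicator of a proposition. -/
noncomputable def ind (p : Prop) : ℝ := by classical exact if p then 1 else 0

lemma ind_of {p : Prop} (h : p) : ind p = 1 := by simp [ind, h]
lemma ind_of_not {p : Prop} (h : ¬ p) : ind p = 0 := by simp [ind, h]
lemma ind_nonneg (p : Prop) : 0 ≤ ind p := by
  by_cases h : p <;> simp [ind_of, ind_of_not, h]
lemma ind_le_one (p : Prop) : ind p ≤ 1 := by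
  by_cases h : p <;> simp [ind_of, ind_of_not, h]
lemma ind_mono {p q : Prop} (h : p → q) : ind p ≤ ind q := by
  by_cases hp : p
  · rw [ind_of hp, ind_of (h hp)]
  · rw [ind_of_not hp]; exact ind_nonneg q
lemma ind_mul_ind (p q : Prop) : ind p * ind q = ind (p ∧ q) := by
  by_cases hp : p <;> by_cases hq : q <;>
    simp [ind_of, ind_of_not, hp, hq]

lemma numLeaves_pos (t : BTree A) : 1 ≤ t.numLeaves := by
  induction t with
  | leaf a => simp [BTree.numLeaves]
  | node a l r ihl ihr => simp [BTree.numLeaves]; omega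

lemma finite_tree : ∀ n : ℕ, {t : BTree A | t.numLeaves ≤ n}.Finite := by
  intro n
  induction n with
  | zero =>
    convert Set.finite_empty
    ext t; simpa using by have := numLeaves_pos t; omega
  | succ n ih =>
    have hsub : {t : BTree A | t.numLeaves ≤ n + 1} ⊆
        (Set.range (BTree.leaf : A → BTree A)) ∪
        ((fun x : A × BTree A × BTree A => BTree.node x.1 x.2.1 x.2.2) ''
          ((Set.univ : Set A) ×ˢ {t : BTree A | t.numLeaves ≤ n} ×ˢ
            {t : BTree A | t.numLeaves ≤ n})) := by
      intro t ht
      cases t with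
      | leaf a => exact Or.inl ⟨a, rfl⟩
      | node a l r =>
        refine Or.inr ⟨(a, l, r), ⟨trivial, ?_, ?_⟩, rfl⟩ <;>
        · simp only [Set.mem_setOf_eq, BTree.numLeaves] at ht ⊢
          have := numLeaves_pos l; have := numLeaves_pos r; omega
    exact Set.Finite.subset
      ((Set.finite_range _).union (((Set.finite_univ).prod (ih.prod ih)).image _)) hsub

lemma finite_ctx : ∀ n : ℕ, {c : Ctx A | c.size ≤ n}.Finite := by
  intro n
  induction n with
  | zero =>
    have : {c : Ctx A | c.size ≤ 0} ⊆ {Ctx.hole} := by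
      intro c hc
      cases c with
      | hole => rfl
      | left a c t =>
        exfalso; simp only [Set.mem_setOf_eq, Ctx.size] at hc
        have := numLeaves_pos t; omega
      | right a t c =>
        exfalso; simp only [Set.mem_setOf_eq, Ctx.size] at hc
        have := numLeaves_pos t; omega
    exact (Set.finite_singleton _).subset this
  | succ n ih =>
    have hsub : {c : Ctx A | c.size ≤ n + 1} ⊆
        {Ctx.hole} ∪
        ((fun x : A × Ctx A × BTree A => Ctx.left x.1 x.2.1 x.2.2) ''
          ((Set.univ : Set A) ×ˢ {c : Ctx A | c.size ≤ n} ×ˢ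
            {t : BTree A | t.numLeaves ≤ n + 1})) ∪
        ((fun x : A × BTree A × Ctx A => Ctx.right x.1 x.2.1 x.2.2) ''
          ((Set.univ : Set A) ×ˢ {t : BTree A | t.numLeaves ≤ n + 1} ×ˢ
            {c : Ctx A | c.size ≤ n})) := by
      intro c hc
      cases c with
      | hole => exact Or.inl (Or.inl rfl)
      | left a c t =>
        refine Or.inl (Or.inr ⟨(a, c, t), ⟨trivial, ?_, ?_⟩, rfl⟩) <;>
        · simp only [Set.mem_setOf_eq, Ctx.size] at hc ⊢
          have := numLeaves_pos t; omega
      | right a t c =>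
        refine Or.inr ⟨(a, t, c), ⟨trivial, ?_, ?_⟩, rfl⟩ <;>
        · simp only [Set.mem_setOf_eq, Ctx.size] at hc ⊢
          have := numLeaves_pos t; omega
    exact Set.Finite.subset
      ((((Set.finite_singleton _).union
        (((Set.finite_univ).prod (ih.prod (finite_tree (n+1)))).image _)).union
        (((Set.finite_univ).prod ((finite_tree (n+1)).prod ih)).image _)) ) hsub

lemma summable_of_support_subset {α : Type*} {f : α → ℝ} {S : Set α} (hS : S.Finite)
    (h : ∀ x, x ∉ S → f x = 0) : Summable f := by
  refine summable_of_ne_finset_zero (s := hS.toFinset) ?_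
  intro x hx
  exact h x (by simpa using hx)

end TreeProc
namespace TreeProc

set_option linter.unusedSectionVars false

variable {A : Type*} [Fintype A] (P : History A → A × Bool → ℝ)

lemma treeProb_nonneg (hP0 : ∀ z x, 0 ≤ P z x) :
    ∀ (t : BTree A) (z : History A), 0 ≤ treeProb P z t := by
  intro t
  induction t with
  | leaf a => intro z; exact hP0 z _
  | node a l r ihl ihr =>
    intro z
    exact mul_nonneg (mul_nonneg (hP0 z _) (ihl _)) (ihr _)

lemma ctxProb_nonneg (hP0 : ∀ z x, 0 ≤ P z x) :
    ∀ (c : Ctx A) (z : History A), 0 ≤ ctxProb P z c := by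
  intro c
  induction c with
  | hole => intro z; exact zero_le_one
  | left a c t ih =>
    intro z
    exact mul_nonneg (mul_nonneg (hP0 z _) (ih _)) (treeProb_nonneg P hP0 t _)
  | right a t c ih =>
    intro z
    exact mul_nonneg (mul_nonneg (hP0 z _) (treeProb_nonneg P hP0 t _)) (ih _)

/-- Total probability of trees with at most `n` leaves. -/
noncomputable def TT (n : ℕ) (z : History A) : ℝ :=
  ∑' t : BTree A, ind (t.numLeaves ≤ n) * treeProb P z t

/-- Total probability of contexts of size exactly `n`. -/
noncomputable def CC (n : ℕ) (z : History A) : ℝ :=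
  ∑' c : Ctx A, ind (c.size = n) * ctxProb P z c

lemma summable_tree_ind {n : ℕ} {f : BTree A → ℝ}
    (h : ∀ t : BTree A, ¬ t.numLeaves ≤ n → f t = 0) : Summable f :=
  summable_of_support_subset (finite_tree n) (by
    intro t ht
    exact h t (by simpa using ht))

lemma summable_ctx_ind {n : ℕ} {f : Ctx A → ℝ}
    (h : ∀ c : Ctx A, ¬ c.size ≤ n → f c = 0) : Summable f :=
  summable_of_support_subset (finite_ctx n) (by
    intro c hc
    exact h c (by simpa using hc))

/-- Decomposition of a summable sum over trees by the root constructor. -/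
lemma tsum_btree (f : BTree A → ℝ) (hf : Summable f) :
    ∑' t : BTree A, f t = (∑ a : A, f (.leaf a)) +
      ∑' x : A × BTree A × BTree A, f (.node x.1 x.2.1 x.2.2) := by
  classical
  have hleaf : Function.Injective (BTree.leaf : A → BTree A) := by
    intro a b h; cases h; rfl
  have hnode : Function.Injective
      (fun x : A × BTree A × BTree A => BTree.node x.1 x.2.1 x.2.2) := by
    rintro ⟨a, l, r⟩ ⟨a', l', r'⟩ h
    simp only at h
    cases h; rfl
  have hcompl : (Set.range (BTree.leaf : A → BTree A)) ∪
      (Set.range (fun x : A × BTree A × BTree A => BTree.node x.1 x.2.1 x.2.2)) =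
      Set.univ := by
    ext t
    simp only [Set.mem_union, Set.mem_range, Set.mem_univ, iff_true]
    cases t with
    | leaf a => exact Or.inl ⟨a, rfl⟩
    | node a l r => exact Or.inr ⟨(a, l, r), rfl⟩
  have hdisj : Disjoint (Set.range (BTree.leaf : A → BTree A))
      (Set.range (fun x : A × BTree A × BTree A => BTree.node x.1 x.2.1 x.2.2)) := by
    rw [Set.disjoint_left]
    rintro t ⟨a, rfl⟩ ⟨x, hx⟩
    simp at hx
  calc ∑' t : BTree A, f t = ∑' t : ↥((Set.range (BTree.leaf : A → BTree A)) ∪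
      (Set.range (fun x : A × BTree A × BTree A => BTree.node x.1 x.2.1 x.2.2))), f t := by
        rw [hcompl, tsum_univ]
    _ = (∑' t : ↥(Set.range (BTree.leaf : A → BTree A)), f t) +
        ∑' t : ↥(Set.range (fun x : A × BTree A × BTree A => BTree.node x.1 x.2.1 x.2.2)), f t :=
        Summable.tsum_union_disjoint hdisj (hf.subtype _) (hf.subtype _)
    _ = (∑ a : A, f (.leaf a)) +
        ∑' x : A × BTree A × BTree A, f (.node x.1 x.2.1 x.2.2) := by
        rw [tsum_range f hleaf, tsum_range f hnode, tsum_fintype]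

/-- Decomposition of a summable sum over contexts by the root constructor. -/
lemma tsum_ctx (f : Ctx A → ℝ) (hf : Summable f) :
    ∑' c : Ctx A, f c = f .hole +
      ((∑' x : A × Ctx A × BTree A, f (.left x.1 x.2.1 x.2.2)) +
       ∑' x : A × BTree A × Ctx A, f (.right x.1 x.2.1 x.2.2)) := by
  classical
  set L : Set (Ctx A) := Set.range (fun x : A × Ctx A × BTree A => Ctx.left x.1 x.2.1 x.2.2)
  set R : Set (Ctx A) := Set.range (fun x : A × BTree A × Ctx A => Ctx.right x.1 x.2.1 x.2.2)
  have hL : Function.Injective (fun x : A × Ctx A × BTree A => Ctx.left x.1 x.2.1 x.2.2) := by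
    rintro ⟨a, c, t⟩ ⟨a', c', t'⟩ h
    simp only at h; cases h; rfl
  have hR : Function.Injective (fun x : A × BTree A × Ctx A => Ctx.right x.1 x.2.1 x.2.2) := by
    rintro ⟨a, t, c⟩ ⟨a', t', c'⟩ h
    simp only at h; cases h; rfl
  have hcompl : ({Ctx.hole} : Set (Ctx A)) ∪ (L ∪ R) = Set.univ := by
    ext c
    simp only [Set.mem_union, Set.mem_singleton_iff, Set.mem_univ, iff_true, L, R,
      Set.mem_range]
    cases c with
    | hole => exact Or.inl rfl
    | left a c t => exact Or.inr (Or.inl ⟨(a, c, t), rfl⟩)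
    | right a t c => exact Or.inr (Or.inr ⟨(a, t, c), rfl⟩)
  have hd1 : Disjoint ({Ctx.hole} : Set (Ctx A)) (L ∪ R) := by
    rw [Set.disjoint_left]
    rintro c rfl h
    rcases h with ⟨x, hx⟩ | ⟨x, hx⟩ <;> simp at hx
  have hd2 : Disjoint L R := by
    rw [Set.disjoint_left]
    rintro c ⟨x, rfl⟩ ⟨y, hy⟩
    simp at hy
  calc ∑' c : Ctx A, f c = ∑' c : ↥(({Ctx.hole} : Set (Ctx A)) ∪ (L ∪ R)), f c := by
        rw [hcompl, tsum_univ]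
    _ = (∑' c : ↥({Ctx.hole} : Set (Ctx A)), f c) + ∑' c : ↥(L ∪ R), f c :=
        Summable.tsum_union_disjoint hd1 (hf.subtype _) (hf.subtype _)
    _ = (∑' c : ↥({Ctx.hole} : Set (Ctx A)), f c) +
        ((∑' c : ↥L, f c) + ∑' c : ↥R, f c) := by
        rw [Summable.tsum_union_disjoint hd2 (hf.subtype _) (hf.subtype _)]
    _ = f .hole + ((∑' x : A × Ctx A × BTree A, f (.left x.1 x.2.1 x.2.2)) +
        ∑' x : A × BTree A × Ctx A, f (.right x.1 x.2.1 x.2.2)) := by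
        rw [tsum_singleton, tsum_range f hL, tsum_range f hR]

end TreeProc
namespace TreeProc

set_option linter.unusedSectionVars false

variable {A : Type*} [Fintype A] (P : History A → A × Bool → ℝ)

lemma tsum_prod_mul {β γ : Type*} (F : β → ℝ) (G : γ → ℝ)
    (hF : Summable F) (hG : Summable G) (hF0 : ∀ b, 0 ≤ F b) (hG0 : ∀ c, 0 ≤ G c) :
    ∑' y : β × γ, F y.1 * G y.2 = (∑' b, F b) * ∑' c, G c := by
  rw [Summable.tsum_prod' (hF.mul_of_nonneg hG hF0 hG0) (fun b => (hG.mul_left (F b)))]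
  calc ∑' b, ∑' c, F b * G c = ∑' b, F b * ∑' c, G c := by
        refine tsum_congr fun b => ?_
        exact tsum_mul_left
    _ = (∑' b, F b) * ∑' c, G c := tsum_mul_right

lemma TT_nonneg (hP0 : ∀ z x, 0 ≤ P z x) (n : ℕ) (z : History A) : 0 ≤ TT P n z :=
  tsum_nonneg fun t => mul_nonneg (ind_nonneg _) (treeProb_nonneg P hP0 t z)

lemma CC_nonneg (hP0 : ∀ z x, 0 ≤ P z x) (n : ℕ) (z : History A) : 0 ≤ CC P n z :=
  tsum_nonneg fun c => mul_nonneg (ind_nonneg _) (ctxProb_nonneg P hP0 c z)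

lemma summable_TT (n : ℕ) (z : History A) :
    Summable (fun t : BTree A => ind (t.numLeaves ≤ n) * treeProb P z t) :=
  summable_tree_ind (n := n) fun t ht => by rw [ind_of_not ht, zero_mul]

lemma sum_P_split (z : History A) :
    (∑ a : A, P z (a, false)) + (∑ a : A, P z (a, true)) = ∑ x : A × Bool, P z x := by
  rw [Fintype.sum_prod_type]
  rw [← Finset.sum_add_distrib]
  refine Finset.sum_congr rfl fun a _ => ?_
  simp [Fintype.sum_bool, add_comm]

/-- The total probability of trees with at most `n` leaves is at most 1. -/
lemma TT_le_one (hP0 : ∀ z x, 0 ≤ P z x) (hP1 : ∀ z, ∑ x : A × Bool, P z x = 1) :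
    ∀ (n : ℕ) (z : History A), TT P n z ≤ 1 := by
  intro n
  induction n with
  | zero =>
    intro z
    have h0 : TT P 0 z = 0 := by
      rw [TT]
      have : ∀ t : BTree A, ind (t.numLeaves ≤ 0) * treeProb P z t = 0 := by
        intro t
        rw [ind_of_not (by have := numLeaves_pos t; omega), zero_mul]
      simp only [this, tsum_zero]
    rw [h0]; exact zero_le_one
  | succ n ih =>
    intro z
    have hdec := tsum_btree (f := fun t : BTree A => ind (t.numLeaves ≤ n + 1) * treeProb P z t)
      (summable_TT P (n+1) z)
    have hleafterm : (∑ a : A, ind ((BTree.leaf a : BTree A).numLeaves ≤ n + 1) *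
        treeProb P z (BTree.leaf a)) = ∑ a : A, P z (a, false) := by
      refine Finset.sum_congr rfl fun a _ => ?_
      rw [ind_of (by simp [BTree.numLeaves])]
      simp [treeProb]
    -- the node part
    have hnode_le : (∑' x : A × BTree A × BTree A,
        ind ((BTree.node x.1 x.2.1 x.2.2).numLeaves ≤ n + 1) *
          treeProb P z (BTree.node x.1 x.2.1 x.2.2)) ≤ ∑ a : A, P z (a, true) := by
      have hsummand : ∀ x : A × BTree A × BTree A,
          ind ((BTree.node x.1 x.2.1 x.2.2).numLeaves ≤ n + 1) *
            treeProb P z (BTree.node x.1 x.2.1 x.2.2) ≤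
          P z (x.1, true) *
            ((ind (x.2.1.numLeaves ≤ n) * treeProb P (z ++ [(x.1, false)]) x.2.1) *
             (ind (x.2.2.numLeaves ≤ n) * treeProb P (z ++ [(x.1, true)]) x.2.2)) := by
        rintro ⟨a, l, r⟩
        simp only [treeProb, BTree.numLeaves]
        have hind : ind (l.numLeaves + r.numLeaves ≤ n + 1) ≤
            ind (l.numLeaves ≤ n) * ind (r.numLeaves ≤ n) := by
          rw [ind_mul_ind]
          refine ind_mono ?_
          have := numLeaves_pos l; have := numLeaves_pos r
          omega
        calc ind (l.numLeaves + r.numLeaves ≤ n + 1) *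
              (P z (a, true) * treeProb P (z ++ [(a, false)]) l *
                treeProb P (z ++ [(a, true)]) r)
            ≤ (ind (l.numLeaves ≤ n) * ind (r.numLeaves ≤ n)) *
              (P z (a, true) * treeProb P (z ++ [(a, false)]) l *
                treeProb P (z ++ [(a, true)]) r) := by
              refine mul_le_mul_of_nonneg_right hind ?_
              exact mul_nonneg (mul_nonneg (hP0 _ _) (treeProb_nonneg P hP0 _ _))
                (treeProb_nonneg P hP0 _ _)
          _ = P z (a, true) *
              ((ind (l.numLeaves ≤ n) * treeProb P (z ++ [(a, false)]) l) *
               (ind (r.numLeaves ≤ n) * treeProb P (z ++ [(a, true)]) r)) := by ring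
      have hsum1 : Summable (fun x : A × BTree A × BTree A =>
          ind ((BTree.node x.1 x.2.1 x.2.2).numLeaves ≤ n + 1) *
            treeProb P z (BTree.node x.1 x.2.1 x.2.2)) := by
        refine summable_of_support_subset
          (S := (Set.univ : Set A) ×ˢ {t : BTree A | t.numLeaves ≤ n + 1} ×ˢ
            {t : BTree A | t.numLeaves ≤ n + 1})
          ((Set.finite_univ).prod ((finite_tree (n+1)).prod (finite_tree (n+1)))) ?_
        rintro ⟨a, l, r⟩ hx
        simp only [Set.mem_prod, Set.mem_univ, Set.mem_setOf_eq, true_and, not_and_or] at hx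
        have : ¬ (BTree.node a l r).numLeaves ≤ n + 1 := by
          simp only [BTree.numLeaves]
          have := numLeaves_pos l; have := numLeaves_pos r
          omega
        rw [ind_of_not this, zero_mul]
      have hsum2 : Summable (fun x : A × BTree A × BTree A =>
          P z (x.1, true) *
            ((ind (x.2.1.numLeaves ≤ n) * treeProb P (z ++ [(x.1, false)]) x.2.1) *
             (ind (x.2.2.numLeaves ≤ n) * treeProb P (z ++ [(x.1, true)]) x.2.2))) := by
        refine summable_of_support_subset
          (S := (Set.univ : Set A) ×ˢ {t : BTree A | t.numLeaves ≤ n} ×ˢ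
            {t : BTree A | t.numLeaves ≤ n})
          ((Set.finite_univ).prod ((finite_tree n).prod (finite_tree n))) ?_
        rintro ⟨a, l, r⟩ hx
        simp only [Set.mem_prod, Set.mem_univ, Set.mem_setOf_eq, true_and, not_and_or] at hx
        rcases hx with h | h <;> rw [ind_of_not h] <;> ring
      refine le_trans (Summable.tsum_le_tsum hsummand hsum1 hsum2) ?_
      -- now compute the RHS sum
      have : ∑' x : A × BTree A × BTree A,
          P z (x.1, true) *
            ((ind (x.2.1.numLeaves ≤ n) * treeProb P (z ++ [(x.1, false)]) x.2.1) *
             (ind (x.2.2.numLeaves ≤ n) * treeProb P (z ++ [(x.1, true)]) x.2.2)) =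
          ∑ a : A, P z (a, true) * (TT P n (z ++ [(a, false)]) * TT P n (z ++ [(a, true)])) := by
        rw [Summable.tsum_prod' hsum2 (fun b => hsum2.prod_factor b), tsum_fintype]
        refine Finset.sum_congr rfl fun a _ => ?_
        dsimp only
        rw [tsum_mul_left]
        congr 1
        exact tsum_prod_mul _ _ (summable_TT P n _) (summable_TT P n _)
          (fun t => mul_nonneg (ind_nonneg _) (treeProb_nonneg P hP0 t _))
          (fun t => mul_nonneg (ind_nonneg _) (treeProb_nonneg P hP0 t _))
      rw [this]
      refine Finset.sum_le_sum fun a _ => ?_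
      have h1 : TT P n (z ++ [(a, false)]) * TT P n (z ++ [(a, true)]) ≤ 1 := by
        have := TT_nonneg P hP0 n (z ++ [(a, false)])
        have := TT_nonneg P hP0 n (z ++ [(a, true)])
        have := ih (z ++ [(a, false)])
        have := ih (z ++ [(a, true)])
        nlinarith
      nlinarith [hP0 z (a, true)]
    calc TT P (n+1) z = (∑ a : A, P z (a, false)) + ∑' x : A × BTree A × BTree A,
          ind ((BTree.node x.1 x.2.1 x.2.2).numLeaves ≤ n + 1) *
            treeProb P z (BTree.node x.1 x.2.1 x.2.2) := by
          rw [TT, hdec, hleafterm]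
      _ ≤ (∑ a : A, P z (a, false)) + ∑ a : A, P z (a, true) := by
          exact add_le_add_right hnode_le _
      _ = 1 := by rw [sum_P_split P z, hP1 z]

end TreeProc
namespace TreeProc

set_option linter.unusedSectionVars false

variable {A : Type*} [Fintype A] (P : History A → A × Bool → ℝ)

/-- First moment: sum of `numLeaves * prob` over trees with at most `n` leaves. -/
noncomputable def MM (n : ℕ) (z : History A) : ℝ :=
  ∑' t : BTree A, ind (t.numLeaves ≤ n) * ((t.numLeaves : ℝ) * treeProb P z t)

lemma ind_congr {p q : Prop} (h : p ↔ q) : ind p = ind q := by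
  by_cases hp : p
  · rw [ind_of hp, ind_of (h.1 hp)]
  · rw [ind_of_not hp, ind_of_not (fun hq => hp (h.2 hq))]

lemma summable_tree_ind' {n : ℕ} {p : BTree A → Prop} {F : BTree A → ℝ}
    (hp : ∀ t, p t → t.numLeaves ≤ n) : Summable (fun t => ind (p t) * F t) :=
  summable_tree_ind (n := n) fun t ht => by
    rw [ind_of_not (fun h => ht (hp t h)), zero_mul]

lemma summable_ctx_ind' {n : ℕ} {p : Ctx A → Prop} {F : Ctx A → ℝ}
    (hp : ∀ c, p c → c.size ≤ n) : Summable (fun c => ind (p c) * F c) :=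
  summable_ctx_ind (n := n) fun c hc => by
    rw [ind_of_not (fun h => hc (hp c h)), zero_mul]

lemma summable_pairBB' {n : ℕ} {p : BTree A × BTree A → Prop} {F : BTree A × BTree A → ℝ}
    (hp : ∀ y, p y → y.1.numLeaves ≤ n ∧ y.2.numLeaves ≤ n) :
    Summable (fun y => ind (p y) * F y) := by
  refine summable_of_support_subset
    (S := {t : BTree A | t.numLeaves ≤ n} ×ˢ {t : BTree A | t.numLeaves ≤ n})
    ((finite_tree n).prod (finite_tree n)) ?_
  intro y hy
  rw [ind_of_not (fun h => hy (by simpa [Set.mem_prod] using hp y h)), zero_mul]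

lemma summable_pairBC' {n : ℕ} {p : BTree A × Ctx A → Prop} {F : BTree A × Ctx A → ℝ}
    (hp : ∀ y, p y → y.1.numLeaves ≤ n ∧ y.2.size ≤ n) :
    Summable (fun y => ind (p y) * F y) := by
  refine summable_of_support_subset
    (S := {t : BTree A | t.numLeaves ≤ n} ×ˢ {c : Ctx A | c.size ≤ n})
    ((finite_tree n).prod (finite_ctx n)) ?_
  intro y hy
  rw [ind_of_not (fun h => hy (by simpa [Set.mem_prod] using hp y h)), zero_mul]

lemma TT_le_MM (hP0 : ∀ z x, 0 ≤ P z x) (n : ℕ) (z : History A) :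
    TT P n z ≤ MM P n z := by
  refine Summable.tsum_le_tsum (fun t => ?_) (summable_TT P n z)
    (summable_tree_ind' (n := n) fun t h => h)
  have h1 : (1 : ℝ) ≤ (t.numLeaves : ℝ) := by
    exact_mod_cast numLeaves_pos t
  have h2 : (0:ℝ) ≤ treeProb P z t := treeProb_nonneg P hP0 t z
  have h3 := ind_nonneg (t.numLeaves ≤ n)
  have h4 : treeProb P z t ≤ (t.numLeaves : ℝ) * treeProb P z t := by nlinarith
  exact mul_le_mul_of_nonneg_left h4 h3

/-- Sum over contexts with a fixed extra weight `k`. -/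
lemma inner_ctx (k n : ℕ) (w : History A) :
    ∑' c : Ctx A, ind (c.size + k = n) * ctxProb P w c = ind (k ≤ n) * CC P (n - k) w := by
  by_cases h : k ≤ n
  · rw [ind_of h, one_mul, CC]
    exact tsum_congr fun c => by rw [ind_congr (by omega : c.size + k = n ↔ c.size = n - k)]
  · rw [ind_of_not h, zero_mul]
    have : ∀ c : Ctx A, ind (c.size + k = n) * ctxProb P w c = 0 := fun c => by
      rw [ind_of_not (by omega), zero_mul]
    simp only [this, tsum_zero]

/-- The key one-sided estimate for the context sum paired with a tree. -/
lemma Xbound (hP0 : ∀ z x, 0 ≤ P z x) (hP1 : ∀ z, ∑ x : A × Bool, P z x = 1)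
    {n : ℕ} (hn : 1 ≤ n)
    (IH : ∀ m, m < n → ∀ w : History A, CC P m w ≤ ((m : ℝ) + 1) * (1 - TT P m w))
    (wc wt : History A) :
    ∑' y : BTree A × Ctx A, ind (y.2.size + y.1.numLeaves = n) *
        (ctxProb P wc y.2 * treeProb P wt y.1) ≤
      ((((n : ℝ) + 1) * TT P n wt - MM P n wt) -
        ∑' y : BTree A × BTree A, ind (y.1.numLeaves + y.2.numLeaves ≤ n) *
          ((((n : ℝ) + 1) - (y.2.numLeaves : ℝ)) *
            (treeProb P wc y.1 * treeProb P wt y.2))) := by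
  have hτ : ∀ (w : History A) (t : BTree A), 0 ≤ treeProb P w t :=
    fun w t => treeProb_nonneg P hP0 t w
  have hγ : ∀ (w : History A) (c : Ctx A), 0 ≤ ctxProb P w c :=
    fun w c => ctxProb_nonneg P hP0 c w
  -- summability of the LHS pair sum
  have hsumX : Summable (fun y : BTree A × Ctx A =>
      ind (y.2.size + y.1.numLeaves = n) * (ctxProb P wc y.2 * treeProb P wt y.1)) :=
    summable_pairBC' (n := n) fun y h => by
      have := numLeaves_pos y.1; omega
  -- Step 1: iterate the sum, tree first
  have step1 : ∑' y : BTree A × Ctx A, ind (y.2.size + y.1.numLeaves = n) *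
      (ctxProb P wc y.2 * treeProb P wt y.1) =
      ∑' t : BTree A, (ind (t.numLeaves ≤ n) * (CC P (n - t.numLeaves) wc *
        treeProb P wt t)) := by
    rw [Summable.tsum_prod' hsumX (fun b => hsumX.prod_factor b)]
    refine tsum_congr fun t => ?_
    have : ∀ c : Ctx A, ind (c.size + t.numLeaves = n) * (ctxProb P wc c * treeProb P wt t)
        = (ind (c.size + t.numLeaves = n) * ctxProb P wc c) * treeProb P wt t := by
      intro c; ring
    simp only [this]
    rw [tsum_mul_right, inner_ctx]
    ring
  rw [step1]
  -- Step 3: pointwise application of the induction hypothesis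
  have step3 : ∑' t : BTree A, (ind (t.numLeaves ≤ n) * (CC P (n - t.numLeaves) wc *
        treeProb P wt t)) ≤
      ∑' t : BTree A, (ind (t.numLeaves ≤ n) * ((((n : ℝ) + 1) - (t.numLeaves : ℝ)) *
        ((1 - TT P (n - t.numLeaves) wc) * treeProb P wt t))) := by
    refine Summable.tsum_le_tsum (fun t => ?_)
      (summable_tree_ind' (n := n) fun t h => h)
      (summable_tree_ind' (n := n) fun t h => h)
    by_cases h : t.numLeaves ≤ n
    · rw [ind_of h, one_mul, one_mul]
      have hlt : n - t.numLeaves < n := by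
        have := numLeaves_pos t; omega
      have hIH := IH (n - t.numLeaves) hlt wc
      have hcast : ((n - t.numLeaves : ℕ) : ℝ) + 1 = ((n : ℝ) + 1) - (t.numLeaves : ℝ) := by
        have := Nat.cast_sub (R := ℝ) h
        rw [this]; ring
      rw [hcast] at hIH
      calc CC P (n - t.numLeaves) wc * treeProb P wt t
          ≤ ((((n : ℝ) + 1) - (t.numLeaves : ℝ)) * (1 - TT P (n - t.numLeaves) wc)) *
            treeProb P wt t := mul_le_mul_of_nonneg_right hIH (hτ _ _)
        _ = (((n : ℝ) + 1) - (t.numLeaves : ℝ)) *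
            ((1 - TT P (n - t.numLeaves) wc) * treeProb P wt t) := by ring
    · rw [ind_of_not h, zero_mul, zero_mul]
  refine le_trans step3 (le_of_eq ?_)
  -- Step 4-6: compute the right-hand side
  have hA : Summable (fun t : BTree A => ind (t.numLeaves ≤ n) *
      ((((n : ℝ) + 1) - (t.numLeaves : ℝ)) * treeProb P wt t)) :=
    summable_tree_ind' (n := n) fun t h => h
  have hB : Summable (fun t : BTree A => ind (t.numLeaves ≤ n) *
      ((((n : ℝ) + 1) - (t.numLeaves : ℝ)) * (TT P (n - t.numLeaves) wc * treeProb P wt t))) :=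
    summable_tree_ind' (n := n) fun t h => h
  have step4 : ∑' t : BTree A, (ind (t.numLeaves ≤ n) * ((((n : ℝ) + 1) - (t.numLeaves : ℝ)) *
        ((1 - TT P (n - t.numLeaves) wc) * treeProb P wt t))) =
      (∑' t : BTree A, ind (t.numLeaves ≤ n) *
        ((((n : ℝ) + 1) - (t.numLeaves : ℝ)) * treeProb P wt t)) -
      ∑' t : BTree A, ind (t.numLeaves ≤ n) *
        ((((n : ℝ) + 1) - (t.numLeaves : ℝ)) * (TT P (n - t.numLeaves) wc * treeProb P wt t)) := by
    rw [← Summable.tsum_sub hA hB]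
    exact tsum_congr fun t => by ring
  rw [step4]
  congr 1
  -- Step 5: the linear term
  · have h5 : ∀ t : BTree A, ind (t.numLeaves ≤ n) *
        ((((n : ℝ) + 1) - (t.numLeaves : ℝ)) * treeProb P wt t) =
        ((n : ℝ) + 1) * (ind (t.numLeaves ≤ n) * treeProb P wt t) -
        ind (t.numLeaves ≤ n) * ((t.numLeaves : ℝ) * treeProb P wt t) := by
      intro t; ring
    simp only [h5]
    rw [Summable.tsum_sub ((summable_TT P n wt).mul_left _)
      (summable_tree_ind' (n := n) fun t h => h)]
    rw [tsum_mul_left, TT, MM]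
  -- Step 6: the bilinear term
  · have h6 : ∀ t : BTree A, ind (t.numLeaves ≤ n) *
        ((((n : ℝ) + 1) - (t.numLeaves : ℝ)) * (TT P (n - t.numLeaves) wc * treeProb P wt t)) =
        ∑' s : BTree A, ind (s.numLeaves + t.numLeaves ≤ n) *
          ((((n : ℝ) + 1) - (t.numLeaves : ℝ)) * (treeProb P wc s * treeProb P wt t)) := by
      intro t
      rw [TT]
      rw [show ind (t.numLeaves ≤ n) * ((((n : ℝ) + 1) - (t.numLeaves : ℝ)) *
          ((∑' s : BTree A, ind (s.numLeaves ≤ n - t.numLeaves) * treeProb P wc s) *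
            treeProb P wt t)) =
          (∑' s : BTree A, ind (s.numLeaves ≤ n - t.numLeaves) * treeProb P wc s) *
          (ind (t.numLeaves ≤ n) * ((((n : ℝ) + 1) - (t.numLeaves : ℝ)) * treeProb P wt t))
        from by ring]
      rw [← tsum_mul_right]
      refine tsum_congr fun s => ?_
      rw [show (ind (s.numLeaves ≤ n - t.numLeaves) * treeProb P wc s) *
          (ind (t.numLeaves ≤ n) * ((((n : ℝ) + 1) - (t.numLeaves : ℝ)) * treeProb P wt t)) =
          (ind (t.numLeaves ≤ n) * ind (s.numLeaves ≤ n - t.numLeaves)) *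
          ((((n : ℝ) + 1) - (t.numLeaves : ℝ)) * (treeProb P wc s * treeProb P wt t)) from by
        ring]
      rw [ind_mul_ind, ind_congr (show (t.numLeaves ≤ n ∧ s.numLeaves ≤ n - t.numLeaves) ↔
        s.numLeaves + t.numLeaves ≤ n from by omega)]
    simp only [h6]
    -- now swap the iterated sums
    have hpair : Summable (fun y : BTree A × BTree A =>
        ind (y.1.numLeaves + y.2.numLeaves ≤ n) *
          ((((n : ℝ) + 1) - (y.2.numLeaves : ℝ)) *
            (treeProb P wc y.1 * treeProb P wt y.2))) :=
      summable_pairBB' (n := n) fun y h => by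
        have := numLeaves_pos y.1; have := numLeaves_pos y.2; omega
    rw [Summable.tsum_prod' hpair (fun b => hpair.prod_factor b)]
    dsimp only
    exact Summable.tsum_comm' (f := fun (s t : BTree A) =>
        ind (s.numLeaves + t.numLeaves ≤ n) *
          ((((n : ℝ) + 1) - (t.numLeaves : ℝ)) * (treeProb P wc s * treeProb P wt t)))
      hpair (fun b => hpair.prod_factor b)
      (fun c => hpair.prod_symm.prod_factor c)

end TreeProc
namespace TreeProc

set_option linter.unusedSectionVars false
set_option maxHeartbeats 1000000

variable {A : Type*} [Fintype A] (P : History A → A × Bool → ℝ)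

/-- The core per-letter inequality. -/
lemma core (hP0 : ∀ z x, 0 ≤ P z x) (hP1 : ∀ z, ∑ x : A × Bool, P z x = 1)
    {n : ℕ} (hn : 1 ≤ n)
    (IH : ∀ m, m < n → ∀ w : History A, CC P m w ≤ ((m : ℝ) + 1) * (1 - TT P m w))
    (w0 w1 : History A) :
    (∑' y : BTree A × Ctx A, ind (y.2.size + y.1.numLeaves = n) *
        (ctxProb P w0 y.2 * treeProb P w1 y.1)) +
    (∑' y : BTree A × Ctx A, ind (y.2.size + y.1.numLeaves = n) *
        (ctxProb P w1 y.2 * treeProb P w0 y.1)) +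
    ((n : ℝ) + 1) * (∑' y : BTree A × BTree A, ind (y.1.numLeaves + y.2.numLeaves ≤ n) *
        (treeProb P w0 y.1 * treeProb P w1 y.2)) ≤ (n : ℝ) + 1 := by
  have hτ : ∀ (w : History A) (t : BTree A), 0 ≤ treeProb P w t :=
    fun w t => treeProb_nonneg P hP0 t w
  set U := TT P n w0 with hU
  set V := TT P n w1 with hV
  set M0 := MM P n w0 with hM0
  set M1 := MM P n w1 with hM1
  have hX := Xbound P hP0 hP1 hn IH w0 w1
  have hY := Xbound P hP0 hP1 hn IH w1 w0
  -- swap the pair sum in hY to put `w0` first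
  have hswap : ∑' y : BTree A × BTree A, ind (y.1.numLeaves + y.2.numLeaves ≤ n) *
      ((((n : ℝ) + 1) - (y.2.numLeaves : ℝ)) * (treeProb P w1 y.1 * treeProb P w0 y.2)) =
      ∑' y : BTree A × BTree A, ind (y.1.numLeaves + y.2.numLeaves ≤ n) *
      ((((n : ℝ) + 1) - (y.1.numLeaves : ℝ)) * (treeProb P w0 y.1 * treeProb P w1 y.2)) := by
    rw [← (Equiv.prodComm (BTree A) (BTree A)).tsum_eq (fun y : BTree A × BTree A =>
      ind (y.1.numLeaves + y.2.numLeaves ≤ n) *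
      ((((n : ℝ) + 1) - (y.2.numLeaves : ℝ)) * (treeProb P w1 y.1 * treeProb P w0 y.2)))]
    refine tsum_congr fun y => ?_
    simp only [Equiv.prodComm_apply, Prod.fst_swap, Prod.snd_swap]
    rw [ind_congr (show y.2.numLeaves + y.1.numLeaves ≤ n ↔
      y.1.numLeaves + y.2.numLeaves ≤ n from by omega)]
    ring
  rw [hswap] at hY
  -- summability of the three pair sums
  have hW : Summable (fun y : BTree A × BTree A =>
      ind (y.1.numLeaves + y.2.numLeaves ≤ n) * (treeProb P w0 y.1 * treeProb P w1 y.2)) :=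
    summable_pairBB' (n := n) fun y h => by
      have := numLeaves_pos y.1; have := numLeaves_pos y.2; omega
  have hX2 : Summable (fun y : BTree A × BTree A =>
      ind (y.1.numLeaves + y.2.numLeaves ≤ n) *
      ((((n : ℝ) + 1) - (y.2.numLeaves : ℝ)) * (treeProb P w0 y.1 * treeProb P w1 y.2))) :=
    summable_pairBB' (n := n) fun y h => by
      have := numLeaves_pos y.1; have := numLeaves_pos y.2; omega
  have hX2' : Summable (fun y : BTree A × BTree A =>
      ind (y.1.numLeaves + y.2.numLeaves ≤ n) *
      ((((n : ℝ) + 1) - (y.1.numLeaves : ℝ)) * (treeProb P w0 y.1 * treeProb P w1 y.2))) :=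
    summable_pairBB' (n := n) fun y h => by
      have := numLeaves_pos y.1; have := numLeaves_pos y.2; omega
  -- combine the three pair sums into one
  have hD : ((n : ℝ) + 1) * (∑' y : BTree A × BTree A,
        ind (y.1.numLeaves + y.2.numLeaves ≤ n) * (treeProb P w0 y.1 * treeProb P w1 y.2)) -
      (∑' y : BTree A × BTree A, ind (y.1.numLeaves + y.2.numLeaves ≤ n) *
        ((((n : ℝ) + 1) - (y.2.numLeaves : ℝ)) * (treeProb P w0 y.1 * treeProb P w1 y.2))) -
      (∑' y : BTree A × BTree A, ind (y.1.numLeaves + y.2.numLeaves ≤ n) *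
        ((((n : ℝ) + 1) - (y.1.numLeaves : ℝ)) * (treeProb P w0 y.1 * treeProb P w1 y.2))) =
      ∑' y : BTree A × BTree A, ind (y.1.numLeaves + y.2.numLeaves ≤ n) *
        (((y.1.numLeaves : ℝ) + (y.2.numLeaves : ℝ) - (n : ℝ) - 1) *
          (treeProb P w0 y.1 * treeProb P w1 y.2)) := by
    rw [← tsum_mul_left, ← Summable.tsum_sub (hW.mul_left _) hX2, ← Summable.tsum_sub ((hW.mul_left _).sub hX2) hX2']
    exact tsum_congr fun y => by ring
  -- bound the combined term
  have hE : ∑' y : BTree A × BTree A, ind (y.1.numLeaves + y.2.numLeaves ≤ n) *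
        (((y.1.numLeaves : ℝ) + (y.2.numLeaves : ℝ) - (n : ℝ) - 1) *
          (treeProb P w0 y.1 * treeProb P w1 y.2)) ≤
      M0 * V + U * M1 - ((n : ℝ) + 1) * (U * V) := by
    have step1 : ∑' y : BTree A × BTree A, ind (y.1.numLeaves + y.2.numLeaves ≤ n) *
        (((y.1.numLeaves : ℝ) + (y.2.numLeaves : ℝ) - (n : ℝ) - 1) *
          (treeProb P w0 y.1 * treeProb P w1 y.2)) ≤
        ∑' y : BTree A × BTree A, (ind (y.1.numLeaves ≤ n) * ind (y.2.numLeaves ≤ n)) *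
        (((y.1.numLeaves : ℝ) + (y.2.numLeaves : ℝ) - (n : ℝ) - 1) *
          (treeProb P w0 y.1 * treeProb P w1 y.2)) := by
      refine Summable.tsum_le_tsum (fun y => ?_)
        (summable_pairBB' (n := n) fun y h => by
          have := numLeaves_pos y.1; have := numLeaves_pos y.2; omega)
        (by
          have : Summable (fun y : BTree A × BTree A =>
              ind (y.1.numLeaves ≤ n ∧ y.2.numLeaves ≤ n) *
              (((y.1.numLeaves : ℝ) + (y.2.numLeaves : ℝ) - (n : ℝ) - 1) *
                (treeProb P w0 y.1 * treeProb P w1 y.2))) :=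
            summable_pairBB' (n := n) fun y h => h
          refine this.congr fun y => ?_
          rw [← ind_mul_ind])
      by_cases h : y.1.numLeaves + y.2.numLeaves ≤ n
      · rw [ind_of h, ind_of (show y.1.numLeaves ≤ n by omega),
          ind_of (show y.2.numLeaves ≤ n by omega)]
        norm_num
      · rw [ind_of_not h, zero_mul]
        have hco : (0 : ℝ) ≤ (y.1.numLeaves : ℝ) + (y.2.numLeaves : ℝ) - (n : ℝ) - 1 := by
          have : n + 1 ≤ y.1.numLeaves + y.2.numLeaves := by omega
          have := (Nat.cast_le (α := ℝ)).2 this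
          push_cast at this ⊢
          linarith
        exact mul_nonneg (mul_nonneg (ind_nonneg _) (ind_nonneg _))
          (mul_nonneg hco (mul_nonneg (hτ _ _) (hτ _ _)))
    refine le_trans step1 (le_of_eq ?_)
    -- expand into products of one-dimensional sums
    have e1 : ∀ y : BTree A × BTree A, (ind (y.1.numLeaves ≤ n) * ind (y.2.numLeaves ≤ n)) *
        (((y.1.numLeaves : ℝ) + (y.2.numLeaves : ℝ) - (n : ℝ) - 1) *
          (treeProb P w0 y.1 * treeProb P w1 y.2)) =
        ((ind (y.1.numLeaves ≤ n) * ((y.1.numLeaves : ℝ) * treeProb P w0 y.1)) *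
          (ind (y.2.numLeaves ≤ n) * treeProb P w1 y.2) +
         (ind (y.1.numLeaves ≤ n) * treeProb P w0 y.1) *
          (ind (y.2.numLeaves ≤ n) * ((y.2.numLeaves : ℝ) * treeProb P w1 y.2))) -
        ((n : ℝ) + 1) * ((ind (y.1.numLeaves ≤ n) * treeProb P w0 y.1) *
          (ind (y.2.numLeaves ≤ n) * treeProb P w1 y.2)) := by
      intro y; ring
    simp only [e1]
    have sm0 : Summable (fun t : BTree A => ind (t.numLeaves ≤ n) *
        ((t.numLeaves : ℝ) * treeProb P w0 t)) := summable_tree_ind' (n := n) fun t h => h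
    have sm1 : Summable (fun t : BTree A => ind (t.numLeaves ≤ n) *
        ((t.numLeaves : ℝ) * treeProb P w1 t)) := summable_tree_ind' (n := n) fun t h => h
    have st0 := summable_TT P n w0
    have st1 := summable_TT P n w1
    have p1 : Summable (fun y : BTree A × BTree A =>
        (ind (y.1.numLeaves ≤ n) * ((y.1.numLeaves : ℝ) * treeProb P w0 y.1)) *
          (ind (y.2.numLeaves ≤ n) * treeProb P w1 y.2)) :=
      sm0.mul_of_nonneg st1
        (fun t => mul_nonneg (ind_nonneg _) (mul_nonneg (Nat.cast_nonneg _) (hτ _ _)))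
        (fun t => mul_nonneg (ind_nonneg _) (hτ _ _))
    have p2 : Summable (fun y : BTree A × BTree A =>
        (ind (y.1.numLeaves ≤ n) * treeProb P w0 y.1) *
          (ind (y.2.numLeaves ≤ n) * ((y.2.numLeaves : ℝ) * treeProb P w1 y.2))) :=
      st0.mul_of_nonneg sm1
        (fun t => mul_nonneg (ind_nonneg _) (hτ _ _))
        (fun t => mul_nonneg (ind_nonneg _) (mul_nonneg (Nat.cast_nonneg _) (hτ _ _)))
    have p3 : Summable (fun y : BTree A × BTree A =>
        (ind (y.1.numLeaves ≤ n) * treeProb P w0 y.1) *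
          (ind (y.2.numLeaves ≤ n) * treeProb P w1 y.2)) :=
      st0.mul_of_nonneg st1
        (fun t => mul_nonneg (ind_nonneg _) (hτ _ _))
        (fun t => mul_nonneg (ind_nonneg _) (hτ _ _))
    rw [Summable.tsum_sub (p1.add p2) (p3.mul_left _), Summable.tsum_add p1 p2, tsum_mul_left]
    rw [tsum_prod_mul _ _ sm0 st1
        (fun t => mul_nonneg (ind_nonneg _) (mul_nonneg (Nat.cast_nonneg _) (hτ _ _)))
        (fun t => mul_nonneg (ind_nonneg _) (hτ _ _)),
      tsum_prod_mul _ _ st0 sm1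
        (fun t => mul_nonneg (ind_nonneg _) (hτ _ _))
        (fun t => mul_nonneg (ind_nonneg _) (mul_nonneg (Nat.cast_nonneg _) (hτ _ _))),
      tsum_prod_mul _ _ st0 st1
        (fun t => mul_nonneg (ind_nonneg _) (hτ _ _))
        (fun t => mul_nonneg (ind_nonneg _) (hτ _ _))]
    rfl
  -- put everything together
  have hfin : (((n : ℝ) + 1) * V - M1) + (((n : ℝ) + 1) * U - M0) +
      (M0 * V + U * M1 - ((n : ℝ) + 1) * (U * V)) ≤ (n : ℝ) + 1 := by
    have hU1 : U ≤ 1 := TT_le_one P hP0 hP1 n w0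
    have hV1 : V ≤ 1 := TT_le_one P hP0 hP1 n w1
    have hU0 : 0 ≤ U := TT_nonneg P hP0 n w0
    have hV0 : 0 ≤ V := TT_nonneg P hP0 n w1
    have hUM : U ≤ M0 := TT_le_MM P hP0 n w0
    have hVM : V ≤ M1 := TT_le_MM P hP0 n w1
    have hn1 : (0 : ℝ) ≤ (n : ℝ) + 1 := by positivity
    nlinarith [mul_nonneg (sub_nonneg.2 hU1) (sub_nonneg.2 hV1),
      mul_nonneg hU0 (sub_nonneg.2 hV1), mul_nonneg hV0 (sub_nonneg.2 hU1),
      mul_nonneg (sub_nonneg.2 hUM) (sub_nonneg.2 hV1),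
      mul_nonneg (sub_nonneg.2 hVM) (sub_nonneg.2 hU1)]
  calc (∑' y : BTree A × Ctx A, ind (y.2.size + y.1.numLeaves = n) *
        (ctxProb P w0 y.2 * treeProb P w1 y.1)) +
      (∑' y : BTree A × Ctx A, ind (y.2.size + y.1.numLeaves = n) *
        (ctxProb P w1 y.2 * treeProb P w0 y.1)) +
      ((n : ℝ) + 1) * (∑' y : BTree A × BTree A, ind (y.1.numLeaves + y.2.numLeaves ≤ n) *
        (treeProb P w0 y.1 * treeProb P w1 y.2))
      ≤ ((((n : ℝ) + 1) * V - M1) -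
          ∑' y : BTree A × BTree A, ind (y.1.numLeaves + y.2.numLeaves ≤ n) *
          ((((n : ℝ) + 1) - (y.2.numLeaves : ℝ)) * (treeProb P w0 y.1 * treeProb P w1 y.2))) +
        ((((n : ℝ) + 1) * U - M0) -
          ∑' y : BTree A × BTree A, ind (y.1.numLeaves + y.2.numLeaves ≤ n) *
          ((((n : ℝ) + 1) - (y.1.numLeaves : ℝ)) * (treeProb P w0 y.1 * treeProb P w1 y.2))) +
        ((n : ℝ) + 1) * (∑' y : BTree A × BTree A, ind (y.1.numLeaves + y.2.numLeaves ≤ n) *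
          (treeProb P w0 y.1 * treeProb P w1 y.2)) := by
        exact add_le_add (add_le_add hX hY) le_rfl
    _ = (((n : ℝ) + 1) * V - M1) + (((n : ℝ) + 1) * U - M0) +
        (((n : ℝ) + 1) * (∑' y : BTree A × BTree A,
            ind (y.1.numLeaves + y.2.numLeaves ≤ n) *
            (treeProb P w0 y.1 * treeProb P w1 y.2)) -
          (∑' y : BTree A × BTree A, ind (y.1.numLeaves + y.2.numLeaves ≤ n) *
            ((((n : ℝ) + 1) - (y.2.numLeaves : ℝ)) *
              (treeProb P w0 y.1 * treeProb P w1 y.2))) -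
          ∑' y : BTree A × BTree A, ind (y.1.numLeaves + y.2.numLeaves ≤ n) *
            ((((n : ℝ) + 1) - (y.1.numLeaves : ℝ)) *
              (treeProb P w0 y.1 * treeProb P w1 y.2))) := by ring
    _ = (((n : ℝ) + 1) * V - M1) + (((n : ℝ) + 1) * U - M0) +
        ∑' y : BTree A × BTree A, ind (y.1.numLeaves + y.2.numLeaves ≤ n) *
          (((y.1.numLeaves : ℝ) + (y.2.numLeaves : ℝ) - (n : ℝ) - 1) *
            (treeProb P w0 y.1 * treeProb P w1 y.2)) := by rw [hD]
    _ ≤ (((n : ℝ) + 1) * V - M1) + (((n : ℝ) + 1) * U - M0) +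
        (M0 * V + U * M1 - ((n : ℝ) + 1) * (U * V)) := by linarith [hE]
    _ ≤ (n : ℝ) + 1 := hfin

end TreeProc
namespace TreeProc

set_option linter.unusedSectionVars false
set_option maxHeartbeats 1000000

variable {A : Type*} [Fintype A] (P : History A → A × Bool → ℝ)

lemma TT_zero (z : History A) : TT P 0 z = 0 := by
  rw [TT]
  have : ∀ t : BTree A, ind (t.numLeaves ≤ 0) * treeProb P z t = 0 := fun t => by
    rw [ind_of_not (by have := numLeaves_pos t; omega), zero_mul]
  simp only [this, tsum_zero]

lemma CC_zero (z : History A) : CC P 0 z = 1 := by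
  rw [CC]
  have hsum : Summable (fun c : Ctx A => ind (c.size = 0) * ctxProb P z c) :=
    summable_ctx_ind' (n := 0) fun c h => le_of_eq h
  rw [tsum_ctx _ hsum]
  have hL : ∀ x : A × Ctx A × BTree A,
      ind ((Ctx.left x.1 x.2.1 x.2.2).size = 0) * ctxProb P z (Ctx.left x.1 x.2.1 x.2.2) = 0 := by
    rintro ⟨a, c, t⟩
    rw [ind_of_not (by simp only [Ctx.size]; have := numLeaves_pos t; omega), zero_mul]
  have hR : ∀ x : A × BTree A × Ctx A,
      ind ((Ctx.right x.1 x.2.1 x.2.2).size = 0) * ctxProb P z (Ctx.right x.1 x.2.1 x.2.2) = 0 := by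
    rintro ⟨a, t, c⟩
    rw [ind_of_not (by simp only [Ctx.size]; have := numLeaves_pos t; omega), zero_mul]
  simp only [hL, hR, tsum_zero, add_zero]
  rw [ind_of (by simp [Ctx.size]), ctxProb]
  norm_num

/-- The main invariant. -/
lemma CC_le_inv (hP0 : ∀ z x, 0 ≤ P z x) (hP1 : ∀ z, ∑ x : A × Bool, P z x = 1) :
    ∀ (n : ℕ) (z : History A), CC P n z ≤ ((n : ℝ) + 1) * (1 - TT P n z) := by
  intro n
  induction n using Nat.strong_induction_on with
  | _ n IH =>
  intro z
  rcases Nat.eq_zero_or_pos n with rfl | hn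
  · rw [CC_zero, TT_zero]
    norm_num
  · -- notation
    have hτ : ∀ (w : History A) (t : BTree A), 0 ≤ treeProb P w t :=
      fun w t => treeProb_nonneg P hP0 t w
    have hγ : ∀ (w : History A) (c : Ctx A), 0 ≤ ctxProb P w c :=
      fun w c => ctxProb_nonneg P hP0 c w
    set X : A → ℝ := fun a => ∑' y : BTree A × Ctx A, ind (y.2.size + y.1.numLeaves = n) *
      (ctxProb P (z ++ [(a, false)]) y.2 * treeProb P (z ++ [(a, true)]) y.1) with hXdef
    set Y : A → ℝ := fun a => ∑' y : BTree A × Ctx A, ind (y.2.size + y.1.numLeaves = n) *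
      (ctxProb P (z ++ [(a, true)]) y.2 * treeProb P (z ++ [(a, false)]) y.1) with hYdef
    set W : A → ℝ := fun a => ∑' y : BTree A × BTree A,
      ind (y.1.numLeaves + y.2.numLeaves ≤ n) *
      (treeProb P (z ++ [(a, false)]) y.1 * treeProb P (z ++ [(a, true)]) y.2) with hWdef
    -- decomposition of CC
    have hCCsum : Summable (fun c : Ctx A => ind (c.size = n) * ctxProb P z c) :=
      summable_ctx_ind' (n := n) fun c h => le_of_eq h
    have hCCdec : CC P n z = (∑ a : A, P z (a, true) * X a) + ∑ a : A, P z (a, true) * Y a := by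
      rw [CC, tsum_ctx _ hCCsum]
      rw [ind_of_not (by simpa [Ctx.size] using by omega), zero_mul, zero_add]
      congr 1
      · -- left part
        have hSL : Summable (fun x : A × Ctx A × BTree A =>
            ind ((Ctx.left x.1 x.2.1 x.2.2).size = n) *
              ctxProb P z (Ctx.left x.1 x.2.1 x.2.2)) := by
          refine summable_of_support_subset
            (S := (Set.univ : Set A) ×ˢ {c : Ctx A | c.size ≤ n} ×ˢ
              {t : BTree A | t.numLeaves ≤ n})
            ((Set.finite_univ).prod ((finite_ctx n).prod (finite_tree n))) ?_
          rintro ⟨a, c, t⟩ hx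
          simp only [Set.mem_prod, Set.mem_univ, Set.mem_setOf_eq, true_and, not_and_or] at hx
          rw [ind_of_not (by simp only [Ctx.size]; have := numLeaves_pos t; omega), zero_mul]
        rw [Summable.tsum_prod' hSL (fun b => hSL.prod_factor b), tsum_fintype]
        refine Finset.sum_congr rfl fun a _ => ?_
        dsimp only
        rw [← (Equiv.prodComm (BTree A) (Ctx A)).tsum_eq]
        rw [hXdef, ← tsum_mul_left]
        refine tsum_congr fun y => ?_
        simp only [Equiv.prodComm_apply, Prod.fst_swap, Prod.snd_swap, Ctx.size, ctxProb]
        ring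
      · -- right part
        have hSR : Summable (fun x : A × BTree A × Ctx A =>
            ind ((Ctx.right x.1 x.2.1 x.2.2).size = n) *
              ctxProb P z (Ctx.right x.1 x.2.1 x.2.2)) := by
          refine summable_of_support_subset
            (S := (Set.univ : Set A) ×ˢ {t : BTree A | t.numLeaves ≤ n} ×ˢ
              {c : Ctx A | c.size ≤ n})
            ((Set.finite_univ).prod ((finite_tree n).prod (finite_ctx n))) ?_
          rintro ⟨a, t, c⟩ hx
          simp only [Set.mem_prod, Set.mem_univ, Set.mem_setOf_eq, true_and, not_and_or] at hx
          rw [ind_of_not (by simp only [Ctx.size]; have := numLeaves_pos t; omega), zero_mul]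
        rw [Summable.tsum_prod' hSR (fun b => hSR.prod_factor b), tsum_fintype]
        refine Finset.sum_congr rfl fun a _ => ?_
        dsimp only
        rw [hYdef, ← tsum_mul_left]
        refine tsum_congr fun y => ?_
        simp only [Ctx.size, ctxProb]
        rw [ind_congr (show y.1.numLeaves + y.2.size = n ↔ y.2.size + y.1.numLeaves = n
          from by omega)]
        ring
    -- decomposition of TT
    have hTTdec : TT P n z = (∑ a : A, P z (a, false)) + ∑ a : A, P z (a, true) * W a := by
      rw [TT, tsum_btree _ (summable_TT P n z)]
      congr 1
      · refine Finset.sum_congr rfl fun a _ => ?_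
        rw [ind_of (by simp [BTree.numLeaves]; omega)]
        simp [treeProb]
      · have hSN : Summable (fun x : A × BTree A × BTree A =>
            ind ((BTree.node x.1 x.2.1 x.2.2).numLeaves ≤ n) *
              treeProb P z (BTree.node x.1 x.2.1 x.2.2)) := by
          refine summable_of_support_subset
            (S := (Set.univ : Set A) ×ˢ {t : BTree A | t.numLeaves ≤ n} ×ˢ
              {t : BTree A | t.numLeaves ≤ n})
            ((Set.finite_univ).prod ((finite_tree n).prod (finite_tree n))) ?_
          rintro ⟨a, l, r⟩ hx
          simp only [Set.mem_prod, Set.mem_univ, Set.mem_setOf_eq, true_and, not_and_or] at hx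
          rw [ind_of_not (show ¬ (BTree.node a l r).numLeaves ≤ n by
            simp only [BTree.numLeaves]
            have := numLeaves_pos l; have := numLeaves_pos r; omega), zero_mul]
        rw [Summable.tsum_prod' hSN (fun b => hSN.prod_factor b), tsum_fintype]
        refine Finset.sum_congr rfl fun a _ => ?_
        dsimp only
        rw [hWdef, ← tsum_mul_left]
        refine tsum_congr fun y => ?_
        simp only [BTree.numLeaves, treeProb]
        ring
    -- per-letter bound
    have hkey : ∀ a ∈ (Finset.univ : Finset A),
        P z (a, true) * X a + P z (a, true) * Y a + ((n : ℝ) + 1) * (P z (a, true) * W a) ≤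
          ((n : ℝ) + 1) * P z (a, true) := by
      intro a _
      have hcore := core P hP0 hP1 hn (fun m hm w => IH m hm w)
        (z ++ [(a, false)]) (z ++ [(a, true)])
      have hq := hP0 z (a, true)
      have := mul_le_mul_of_nonneg_left hcore hq
      rw [hXdef, hYdef, hWdef]
      dsimp only
      nlinarith [this]
    have hsum := Finset.sum_le_sum hkey
    have hPsplit : (∑ a : A, P z (a, false)) + (∑ a : A, P z (a, true)) = 1 := by
      rw [sum_P_split P z, hP1 z]
    have hmain : CC P n z + ((n : ℝ) + 1) * TT P n z ≤ (n : ℝ) + 1 := by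
      calc CC P n z + ((n : ℝ) + 1) * TT P n z
          = (∑ a : A, (P z (a, true) * X a + P z (a, true) * Y a +
              ((n : ℝ) + 1) * (P z (a, true) * W a))) +
            ((n : ℝ) + 1) * ∑ a : A, P z (a, false) := by
            rw [hCCdec, hTTdec]
            rw [Finset.sum_add_distrib, Finset.sum_add_distrib, ← Finset.mul_sum]
            ring
        _ ≤ (∑ a : A, ((n : ℝ) + 1) * P z (a, true)) +
            ((n : ℝ) + 1) * ∑ a : A, P z (a, false) := by
            exact add_le_add_left hsum _
        _ = ((n : ℝ) + 1) * ((∑ a : A, P z (a, false)) + ∑ a : A, P z (a, true)) := by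
            rw [← Finset.mul_sum]; ring
        _ = (n : ℝ) + 1 := by rw [hPsplit, mul_one]
    linarith
end TreeProc

/-- For every tree process `P` and every `n ≥ 1`, the sum of `Prob_P(c)` over
all contexts `c` with `|c| = n` is at most `n + 1`. -/
theorem tsum_ctxProb_le {A : Type*} [Fintype A]
    (P : History A → A × Bool → ℝ)
    (hP0 : ∀ z x, 0 ≤ P z x) (hP1 : ∀ z, ∑ x : A × Bool, P z x = 1)
    (n : ℕ) (hn : 1 ≤ n) :
    ∑' c : {c : Ctx A // c.size = n}, ctxProb P [] c.val ≤ n + 1 := by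
  have h1 : (∑' c : {c : Ctx A // c.size = n}, ctxProb P [] c.val) = TreeProc.CC P n [] := by
    calc (∑' c : {c : Ctx A // c.size = n}, ctxProb P [] c.val)
        = ∑' c : Ctx A, Set.indicator {c : Ctx A | c.size = n} (ctxProb P []) c :=
          tsum_subtype _ _
      _ = TreeProc.CC P n [] := by
          rw [TreeProc.CC]
          refine tsum_congr fun c => ?_
          by_cases h : c.size = n
          · rw [Set.indicator_of_mem (show c ∈ {c : Ctx A | c.size = n} from h),
              TreeProc.ind_of h, one_mul]
          · rw [Set.indicator_of_notMem (show c ∉ {c : Ctx A | c.size = n} from h),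
              TreeProc.ind_of_not h, zero_mul]
  have h2 := TreeProc.CC_le_inv P hP0 hP1 n []
  have h3 := TreeProc.TT_nonneg P hP0 n []
  rw [h1]
  have hn1 : (0 : ℝ) ≤ (n : ℝ) + 1 := by positivity
  nlinarith
end

section
/- For every tree t in a set of trees T, the number of distinct contexts c with |c| = n such that t = c[s] for some tree s is at most n+1. -/
/-- `c[s]`: the tree obtained from the context `c` by replacing the parameter
leaf by the tree `s`. -/
def Ctx.subst {A : Type*} : Ctx A → BTree A → BTree A
  | .hole, s => s
  | .left a c t, s => .node a (c.subst s) t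
  | .right a t c, s => .node a t (c.subst s)

def CtxSet {A : Type*} (t : BTree A) (n : ℕ) : Set (Ctx A) :=
  {c | c.size = n ∧ ∃ s, c.subst s = t}

lemma BTree.one_le_numLeaves {A : Type*} (t : BTree A) : 1 ≤ t.numLeaves := by
  induction t with
  | leaf a => simp [numLeaves]
  | node a l r ihl ihr => simp [numLeaves]; omega

lemma Ctx.subst_numLeaves {A : Type*} (c : Ctx A) (s : BTree A) :
    (c.subst s).numLeaves = c.size + s.numLeaves := by
  induction c with
  | hole => simp [subst, size]
  | left a c t ih => simp [subst, size, BTree.numLeaves, ih]; omega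
  | right a t c ih => simp [subst, size, BTree.numLeaves, ih]; omega

lemma CtxSet_empty {A : Type*} (t : BTree A) (n : ℕ) (h : t.numLeaves < n + 1) :
    CtxSet t n = ∅ := by
  ext c
  simp only [CtxSet, Set.mem_setOf_eq, Set.mem_empty_iff_false, iff_false, not_and]
  rintro rfl ⟨s, rfl⟩
  have := Ctx.subst_numLeaves c s
  have := s.one_le_numLeaves
  omega

lemma CtxSet_leaf_subset {A : Type*} (a : A) (n : ℕ) :
    CtxSet (BTree.leaf a) n ⊆ {Ctx.hole} := by
  rintro c ⟨hs, s, hsub⟩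
  cases c with
  | hole => simp
  | left b c' t => simp [Ctx.subst] at hsub
  | right b t c' => simp [Ctx.subst] at hsub

lemma CtxSet_node_subset {A : Type*} (a : A) (l r : BTree A) (n : ℕ) :
    CtxSet (BTree.node a l r) n ⊆
      {Ctx.hole} ∪ (fun c => Ctx.left a c r) '' CtxSet l (n - r.numLeaves)
        ∪ (fun c => Ctx.right a l c) '' CtxSet r (n - l.numLeaves) := by
  rintro c ⟨hs, s, hsub⟩
  cases c with
  | hole => left; left; simp
  | left b c' t =>
    simp only [Ctx.subst, BTree.node.injEq] at hsub
    obtain ⟨rfl, hl, rfl⟩ := hsub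
    left; right
    exact ⟨c', ⟨by simp [Ctx.size] at hs; omega, s, hl⟩, rfl⟩
  | right b t c' =>
    simp only [Ctx.subst, BTree.node.injEq] at hsub
    obtain ⟨rfl, rfl, hr⟩ := hsub
    right
    exact ⟨c', ⟨by simp [Ctx.size] at hs; have := BTree.one_le_numLeaves t; omega, s, hr⟩, rfl⟩

lemma CtxSet_finite {A : Type*} (t : BTree A) (n : ℕ) : (CtxSet t n).Finite := by
  induction t generalizing n with
  | leaf a => exact (Set.finite_singleton _).subset (CtxSet_leaf_subset a n)
  | node a l r ihl ihr =>
    exact (((Set.finite_singleton _).union ((ihl _).image _)).union ((ihr _).image _)).subset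
      (CtxSet_node_subset a l r n)

/-- For every tree `t`, the number of distinct contexts `c` with `|c| = n` such
that `t = c[s]` for some tree `s` is at most `n + 1`. -/
theorem card_contexts_le {A : Type*} (t : BTree A) (n : ℕ) :
    {c : Ctx A | c.size = n ∧ ∃ s, c.subst s = t}.ncard ≤ n + 1 := by
  show (CtxSet t n).ncard ≤ n + 1
  induction t generalizing n with
  | leaf a =>
    have := Set.ncard_le_ncard (CtxSet_leaf_subset a n) (Set.finite_singleton _)
    simpa using this.trans (by simp)
  | node a l r ihl ihr =>
    rcases Nat.lt_or_ge (BTree.numLeaves (BTree.node a l r)) (n + 1) with h | hle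
    · rw [CtxSet_empty _ n h]; simp
    · simp only [BTree.numLeaves] at hle
      rcases Nat.eq_zero_or_pos n with rfl | hn
      · have hsub : CtxSet (BTree.node a l r) 0 ⊆ {Ctx.hole} := by
          rintro c ⟨hs, s, hsubst⟩
          cases c with
          | hole => simp
          | left b c' t =>
            simp only [Ctx.size] at hs; have := BTree.one_le_numLeaves t; omega
          | right b t c' =>
            simp only [Ctx.size] at hs; have := BTree.one_le_numLeaves t; omega
        have := Set.ncard_le_ncard hsub (Set.finite_singleton _)
        simpa using this.trans (by simp)
      · rcases Nat.lt_or_ge n r.numLeaves with hr | hr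
        · -- only right contexts possible
          have hsub : CtxSet (BTree.node a l r) n ⊆
              (fun c => Ctx.right a l c) '' CtxSet r (n - l.numLeaves) := by
            rintro c ⟨hs, s, hsubst⟩
            cases c with
            | hole => simp only [Ctx.size] at hs; omega
            | left b c' t =>
              simp only [Ctx.subst, BTree.node.injEq] at hsubst
              obtain ⟨rfl, hl', rfl⟩ := hsubst
              simp only [Ctx.size] at hs; omega
            | right b t c' =>
              simp only [Ctx.subst, BTree.node.injEq] at hsubst
              obtain ⟨rfl, rfl, hr'⟩ := hsubst
              simp only [Ctx.size] at hs
              exact ⟨c', ⟨by omega, s, hr'⟩, rfl⟩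
          have h1 := Set.ncard_le_ncard hsub ((CtxSet_finite r _).image _)
          have h2 := Set.ncard_image_le (f := fun c => Ctx.right a l c)
            (CtxSet_finite r (n - l.numLeaves))
          have h3 := ihr (n - l.numLeaves)
          omega
        rcases Nat.lt_or_ge n l.numLeaves with hl | hl
        · -- only left contexts possible
          have hsub : CtxSet (BTree.node a l r) n ⊆
              (fun c => Ctx.left a c r) '' CtxSet l (n - r.numLeaves) := by
            rintro c ⟨hs, s, hsubst⟩
            cases c with
            | hole => simp only [Ctx.size] at hs; omega
            | left b c' t =>
              simp only [Ctx.subst, BTree.node.injEq] at hsubst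
              obtain ⟨rfl, hl', rfl⟩ := hsubst
              simp only [Ctx.size] at hs
              exact ⟨c', ⟨by omega, s, hl'⟩, rfl⟩
            | right b t c' =>
              simp only [Ctx.subst, BTree.node.injEq] at hsubst
              obtain ⟨rfl, rfl, hr'⟩ := hsubst
              simp only [Ctx.size] at hs; omega
          have h1 := Set.ncard_le_ncard hsub ((CtxSet_finite l _).image _)
          have h2 := Set.ncard_image_le (f := fun c => Ctx.left a c r)
            (CtxSet_finite l (n - r.numLeaves))
          have h3 := ihl (n - r.numLeaves)
          omega
        · -- both kinds possible, but not the hole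
          have hsub : CtxSet (BTree.node a l r) n ⊆
              (fun c => Ctx.left a c r) '' CtxSet l (n - r.numLeaves) ∪
                (fun c => Ctx.right a l c) '' CtxSet r (n - l.numLeaves) := by
            rintro c ⟨hs, s, hsubst⟩
            cases c with
            | hole => simp only [Ctx.size] at hs; omega
            | left b c' t =>
              simp only [Ctx.subst, BTree.node.injEq] at hsubst
              obtain ⟨rfl, hl', rfl⟩ := hsubst
              simp only [Ctx.size] at hs
              exact Or.inl ⟨c', ⟨by omega, s, hl'⟩, rfl⟩
            | right b t c' =>
              simp only [Ctx.subst, BTree.node.injEq] at hsubst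
              obtain ⟨rfl, rfl, hr'⟩ := hsubst
              simp only [Ctx.size] at hs
              exact Or.inr ⟨c', ⟨by omega, s, hr'⟩, rfl⟩
          have h1 := Set.ncard_le_ncard hsub
            (((CtxSet_finite l _).image _).union ((CtxSet_finite r _).image _))
          have h2 := Set.ncard_union_le
            ((fun c => Ctx.left a c r) '' CtxSet l (n - r.numLeaves))
            ((fun c => Ctx.right a l c) '' CtxSet r (n - l.numLeaves))
          have h3 := Set.ncard_image_le (f := fun c => Ctx.left a c r)
            (CtxSet_finite l (n - r.numLeaves))
          have h4 := Set.ncard_image_le (f := fun c => Ctx.right a l c)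
            (CtxSet_finite r (n - l.numLeaves))
          have h5 := ihl (n - r.numLeaves)
          have h6 := ihr (n - l.numLeaves)
          have hl1 := BTree.one_le_numLeaves l
          have hr1 := BTree.one_le_numLeaves r
          omega
end

section
/- For the strings S_n defined by S₁ = baa and S_n = b·S_{n−1}·S_{n−1}, and for every 1 ≤ m ≤ n: the number of occurrences of b^m as a factor of S_n is 2^{n−m+1} − 1, and exactly 2^{n−m} of these occurrences are immediately followed by the character a. -/
/-- The strings `S n` over `{a, b}` (here `a = false`, `b = true`), with
`S 1 = baa` and `S (n+1) = b · S n · S n`. -/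
def S : ℕ → List Bool
  | 0 => []
  | 1 => [true, false, false]
  | (n+2) => true :: (S (n+1) ++ S (n+1))

def C (p l : List Bool) : ℕ :=
  (List.range l.length).countP (fun i => decide ((l.drop i).take p.length = p))

lemma no_cross (p u v : List Bool) (hp : ∀ (j : ℕ) (h : j + 1 < p.length), p[j] = true)
    (w : List Bool) (hu : u = w ++ [false]) :
    ∀ i, i < u.length → u.length < i + p.length →
      ((u ++ v).drop i).take p.length ≠ p := by
  intro i hi hcross heq
  have hul : u.length = w.length + 1 := by simp [hu]
  set j := u.length - 1 - i with hj
  have hj1 : j + 1 < p.length := by omega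
  have hji : i + j = w.length := by omega
  have h1 := congrArg (fun l => l[j]?) heq
  simp only [List.getElem?_take, if_pos (by omega : j < p.length), List.getElem?_drop] at h1
  rw [hji] at h1
  have h2 : (u ++ v)[w.length]? = some false := by
    subst hu
    rw [List.append_assoc, List.getElem?_append_right (by simp)]
    simp
  rw [h2, List.getElem?_eq_getElem (by omega), hp j hj1] at h1
  exact Bool.noConfusion (Option.some.inj h1)

lemma count_append (p u v : List Bool)
    (hc : ∀ i, i < u.length → u.length < i + p.length →
      ((u ++ v).drop i).take p.length ≠ p) :
    C p (u ++ v) = C p u + C p v := by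
  unfold C
  rw [List.length_append, List.range_add, List.countP_append, List.countP_map]
  congr 1
  · apply List.countP_congr
    intro i hi
    have hi' : i < u.length := List.mem_range.mp hi
    simp only [decide_eq_true_eq]
    by_cases hcross : u.length < i + p.length
    · constructor
      · intro h; exact absurd h (hc i hi' hcross)
      · intro h
        have := congrArg List.length h
        simp only [List.length_take, List.length_drop] at this
        omega
    · push_neg at hcross
      rw [List.drop_append_of_le_length (by omega),
        List.take_append_of_le_length (by simp [List.length_drop]; omega)]
  · apply List.countP_congr
    intro i hi
    simp only [Function.comp, List.drop_length_add_append]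

lemma count_cons_true (p l : List Bool) :
    C p (true :: l) = C p l + (if (true :: l).take p.length = p then 1 else 0) := by
  unfold C
  rw [List.length_cons, List.range_succ_eq_map, List.countP_cons, List.countP_map]
  have h1 : List.countP
      ((fun i => decide (List.take p.length (List.drop i (true :: l)) = p)) ∘ Nat.succ)
      (List.range l.length) =
      List.countP (fun i => decide (List.take p.length (List.drop i l) = p))
      (List.range l.length) := by
    apply List.countP_congr
    intro i hi
    simp [Function.comp]
  rw [h1]
  simp

lemma S_start : ∀ n, 1 ≤ n → ∃ t, S n = List.replicate n true ++ (false :: t) := by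
  intro n hn
  induction n with
  | zero => omega
  | succ k ih =>
    rcases Nat.eq_or_lt_of_le hn with h | h
    · exact ⟨[false], by simp [← h, S]⟩
    · obtain ⟨k', rfl⟩ : ∃ k', k = k' + 1 := ⟨k - 1, by omega⟩
      obtain ⟨t, ht⟩ := ih (by omega)
      refine ⟨t ++ S (k' + 1), ?_⟩
      show true :: (S (k' + 1) ++ S (k' + 1)) = _
      rw [ht]
      simp [List.replicate_succ]

lemma S_end : ∀ n, 1 ≤ n → ∃ w, S n = w ++ [false] := by
  intro n hn
  induction n with
  | zero => omega
  | succ k ih =>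
    rcases Nat.eq_or_lt_of_le hn with h | h
    · exact ⟨[true, false], by simp [← h, S]⟩
    · obtain ⟨k', rfl⟩ : ∃ k', k = k' + 1 := ⟨k - 1, by omega⟩
      obtain ⟨w, hw⟩ := ih (by omega)
      refine ⟨true :: (S (k' + 1) ++ w), ?_⟩
      show true :: (S (k' + 1) ++ S (k' + 1)) = _
      rw [hw]
      simp

lemma S_length_ge (n : ℕ) (hn : 1 ≤ n) : n + 1 ≤ (S n).length := by
  obtain ⟨t, ht⟩ := S_start n hn
  rw [ht]; simp

lemma take_S_of_le (n m : ℕ) (hn : 1 ≤ n) (hm : m ≤ n) (v : List Bool) :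
    (S n ++ v).take m = List.replicate m true ∧ (S n).take m = List.replicate m true := by
  obtain ⟨t, ht⟩ := S_start n hn
  constructor
  · rw [ht, List.append_assoc, List.take_append_of_le_length (by simp [hm]),
      List.take_replicate]
    congr 1; omega
  · rw [ht, List.take_append_of_le_length (by simp [hm]), List.take_replicate]
    congr 1; omega

lemma take_S_succ (n : ℕ) (hn : 1 ≤ n) (v : List Bool) :
    (S n ++ v).take (n + 1) = List.replicate n true ++ [false] ∧
    (S n).take (n + 1) = List.replicate n true ++ [false] := by
  obtain ⟨t, ht⟩ := S_start n hn
  constructor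
  · rw [ht, List.append_assoc,
      show n + 1 = (List.replicate n true).length + 1 by simp,
      List.take_append]
    simp
  · rw [ht, show n + 1 = (List.replicate n true).length + 1 by simp,
      List.take_append]
    simp

lemma no_long_run : ∀ n, 1 ≤ n → ∀ i, ((S n).drop i).take (n + 1) ≠ List.replicate (n + 1) true := by
  intro n hn
  induction n with
  | zero => omega
  | succ k ih =>
    rcases Nat.eq_or_lt_of_le hn with h | h
    · -- n = 1
      intro i heq
      rw [← h] at heq
      match i with
      | 0 => simp [S] at heq
      | 1 => simp [S] at heq
      | 2 => simp [S] at heq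
      | (j+3) =>
        rw [show S 1 = [true, false, false] from rfl] at heq
        simp at heq
    · obtain ⟨k', rfl⟩ : ∃ k', k = k' + 1 := ⟨k - 1, by omega⟩
      set q := k' + 1 with hq
      have hq1 : 1 ≤ q := by omega
      have hSs : S (q + 1) = true :: (S q ++ S q) := rfl
      have hlen : q + 1 ≤ (S q).length := S_length_ge q hq1
      intro i heq
      rw [hSs] at heq
      match i with
      | 0 =>
        rw [List.drop_zero, List.take_succ_cons] at heq
        rw [(take_S_succ q hq1 (S q)).1, List.replicate_succ, List.replicate_succ'] at heq
        simp only [hq, List.replicate_succ] at heq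
        injection heq with h1 heq2
        injection heq2 with h3 heq3
        have h2 := List.append_cancel_left heq3
        simp at h2
      | (j+1) =>
        rw [List.drop_succ_cons] at heq
        have heq' : ((S q ++ S q).drop j).take (q + 1) = List.replicate (q + 1) true := by
          have := congrArg (List.take (q + 1)) heq
          rw [List.take_take, List.take_replicate] at this
          simpa using this
        by_cases hj : j < (S q).length
        · by_cases hcr : (S q).length < j + (q + 1)
          · obtain ⟨w, hw⟩ := S_end q hq1
            have hnc := no_cross (List.replicate (q+1) true) (S q) (S q)
              (fun j hj => List.getElem_replicate _) w hw j hj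
            simp only [List.length_replicate] at hnc
            exact hnc hcr heq'
          · push_neg at hcr
            rw [List.drop_append_of_le_length (by omega),
              List.take_append_of_le_length (by simp [List.length_drop]; omega)] at heq'
            exact ih (by omega) j heq'
        · push_neg at hj
          rw [show j = (S q).length + (j - (S q).length) by omega, List.drop_length_add_append] at heq'
          exact ih (by omega) (j - (S q).length) heq'

lemma C_S_zero (n : ℕ) (hn : 1 ≤ n) :
    C (List.replicate (n+1) true) (S n) = 0 ∧
    C (List.replicate (n+1) true ++ [false]) (S n) = 0 := by
  constructor
  · apply List.countP_eq_zero.mpr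
    intro i _
    simp only [List.length_replicate, decide_eq_true_eq]
    exact no_long_run n hn i
  · apply List.countP_eq_zero.mpr
    intro i _
    simp only [List.length_append, List.length_replicate, List.length_cons,
      List.length_nil, decide_eq_true_eq]
    intro heq
    have h2 := congrArg (List.take (n+1)) heq
    rw [List.take_take, List.take_append_of_le_length (by simp)] at h2
    simp only [List.take_replicate] at h2
    apply no_long_run n hn i
    rw [show (n+1) ⊓ (n+1+1) = n + 1 by omega] at h2
    rw [h2]
    congr 1
    omega

lemma main_count : ∀ n, 1 ≤ n → ∀ m, 1 ≤ m → m ≤ n →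
    C (List.replicate m true) (S n) = 2 ^ (n - m + 1) - 1 ∧
    C (List.replicate m true ++ [false]) (S n) = 2 ^ (n - m) := by
  intro n hn
  induction n with
  | zero => omega
  | succ k ih =>
    intro m hm1 hmk
    rcases Nat.eq_or_lt_of_le hn with h | h
    · have hk0 : k = 0 := by omega
      have hm1' : m = 1 := by omega
      subst hk0; subst hm1'
      constructor <;> decide
    · obtain ⟨k', rfl⟩ : ∃ k', k = k' + 1 := ⟨k - 1, by omega⟩
      have hk1 : 1 ≤ k' + 1 := by omega
      have hSs : S (k' + 1 + 1) = true :: (S (k'+1) ++ S (k'+1)) := rfl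
      obtain ⟨w, hw⟩ := S_end (k'+1) hk1
      have hlen : k' + 2 ≤ (S (k'+1)).length := S_length_ge _ hk1
      have hp1 : ∀ (j : ℕ) (h : j + 1 < (List.replicate m true).length),
          (List.replicate m true)[j] = true := fun j h => List.getElem_replicate _
      have hp2 : ∀ (j : ℕ) (h : j + 1 < (List.replicate m true ++ [false]).length),
          (List.replicate m true ++ [false])[j] = true := by
        intro j hj
        simp only [List.length_append, List.length_replicate, List.length_cons,
          List.length_nil] at hj
        rw [List.getElem_append_left (by simp; omega)]
        exact List.getElem_replicate _
      have hdec : ∀ p : List Bool, (∀ (j : ℕ) (h : j + 1 < p.length), p[j] = true) →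
          C p (S (k'+1+1)) = C p (S (k'+1)) + C p (S (k'+1)) +
            (if (true :: (S (k'+1) ++ S (k'+1))).take p.length = p then 1 else 0) := by
        intro p hp
        rw [hSs, count_cons_true, count_append p _ _ (no_cross p _ _ hp w hw)]
      by_cases hm : m ≤ k' + 1
      · obtain ⟨IH1, IH2⟩ := ih (by omega) m hm1 hm
        obtain ⟨m'', rfl⟩ : ∃ m'', m = m'' + 1 := ⟨m - 1, by omega⟩
        constructor
        · rw [hdec _ hp1, IH1]
          rw [List.length_replicate, List.take_succ_cons,
            (take_S_of_le (k'+1) m'' hk1 (by omega) _).1]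
          rw [if_pos (by rw [List.replicate_succ])]
          have hpos : 1 ≤ 2 ^ (k' + 1 - (m'' + 1) + 1) := Nat.one_le_two_pow
          rw [show k' + 1 + 1 - (m'' + 1) + 1 = (k' + 1 - (m'' + 1) + 1) + 1 by omega,
            pow_succ]
          omega
        · rw [hdec _ hp2, IH2]
          rw [show (List.replicate (m''+1) true ++ [false]).length = m'' + 1 + 1 by simp,
            List.take_succ_cons, (take_S_of_le (k'+1) (m''+1) hk1 (by omega) _).1]
          rw [if_neg ?_]
          · rw [show k' + 1 + 1 - (m'' + 1) = (k' + 1 - (m'' + 1)) + 1 by omega, pow_succ]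
            omega
          · intro hcon
            have hx := congrArg (fun l => l[(m''+1)]?) hcon
            rw [show true :: List.replicate (m''+1) true = List.replicate (m''+2) true
              from rfl] at hx
            rw [List.getElem?_append_right (by simp)] at hx
            simp at hx
      · have hm2 : m = k' + 2 := by omega
        subst hm2
        obtain ⟨hz1, hz2⟩ := C_S_zero (k'+1) hk1
        constructor
        · rw [hdec _ hp1]
          rw [show List.replicate (k'+2) true = List.replicate (k'+1+1) true from rfl] at hz1 ⊢
          rw [hz1]
          rw [List.length_replicate, List.take_succ_cons,
            (take_S_of_le (k'+1) (k'+1) hk1 le_rfl _).1]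
          rw [if_pos (show true :: List.replicate (k'+1) true = List.replicate (k'+1+1) true
            by rfl)]
          rw [show k' + 1 + 1 - (k' + 2) + 1 = 1 by omega]
          norm_num
        · rw [hdec _ hp2]
          rw [show List.replicate (k'+2) true = List.replicate (k'+1+1) true from rfl] at hz2 ⊢
          rw [hz2]
          rw [show (List.replicate (k'+1+1) true ++ [false]).length = k' + 2 + 1 by simp,
            List.take_succ_cons, (take_S_succ (k'+1) hk1 _).1]
          rw [if_pos (show true :: (List.replicate (k'+1) true ++ [false]) =
            List.replicate (k'+1+1) true ++ [false] by rfl)]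
          rw [show k' + 1 + 1 - (k' + 2) = 0 by omega]
          norm_num

/-- For every `1 ≤ m ≤ n`: the number of occurrences of `b^m` as a factor of
`S n` is `2^(n−m+1) − 1`, and exactly `2^(n−m)` of these occurrences are
immediately followed by the character `a`. -/
theorem count_bm_occurrences (n m : ℕ) (hm : 1 ≤ m) (hmn : m ≤ n) :
    ((Finset.range (S n).length).filter
        (fun i => ((S n).drop i).take m = List.replicate m true)).card =
      2 ^ (n - m + 1) - 1 ∧
    ((Finset.range (S n).length).filter
        (fun i => ((S n).drop i).take (m + 1) =
          List.replicate m true ++ [false])).card = 2 ^ (n - m) := by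
  obtain ⟨h1, h2⟩ := main_count n (hm.trans hmn) m hm hmn
  constructor
  · have e1 : C (List.replicate m true) (S n) =
        (List.range (S n).length).countP
          (fun i => decide (((S n).drop i).take m = List.replicate m true)) := by
      unfold C; rw [List.length_replicate]
    rw [e1] at h1
    rw [← Nat.count_eq_card_filter_range]
    exact h1
  · have e2 : C (List.replicate m true ++ [false]) (S n) =
        (List.range (S n).length).countP
          (fun i => decide (((S n).drop i).take (m + 1) =
            List.replicate m true ++ [false])) := by
      unfold C
      rw [show (List.replicate m true ++ [false]).length = m + 1 by simp]
    rw [e2] at h2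
    rw [← Nat.count_eq_card_filter_range]
    exact h2
end

section
/- For every 1 ≤ k < n, the k-th order empirical entropy of the string S_n (with S₁ = baa, S_n = b·S_{n−1}·S_{n−1}) satisfies H_k(S_n) ≥ 2^{n−k}, although there exists a straight-line program of size 3n generating S_n. -/
/-- A straight-line program over the alphabet `α`: a context-free grammar with
nonterminals `0, ..., m−1` in which every nonterminal has exactly one rule and
rules only refer to nonterminals of larger index (which makes the grammar
acyclic), so that the grammar derives exactly one string from each
nonterminal. -/
structure SLP (α : Type*) where
  m : ℕ
  rhs : Fin m → List (Fin m ⊕ α)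
  wf : ∀ i j, Sum.inl j ∈ rhs i → (i : ℕ) < (j : ℕ)

/-- The size of an SLP: the total length of all right-hand sides. -/
def SLP.size {α : Type*} (G : SLP α) : ℕ := ∑ i, (G.rhs i).length

/-- The string derived from a nonterminal of an SLP. -/
def SLP.expand {α : Type*} (G : SLP α) (i : Fin G.m) : List α :=
  (G.rhs i).attach.flatMap (fun x =>
    match hx : x.val with
    | Sum.inl j => G.expand j
    | Sum.inr a => [a])
termination_by G.m - i
decreasing_by
  exact Nat.sub_lt_sub_left i.isLt (G.wf i j (hx ▸ x.property))

/-- The string `w(α)` of characters immediately following the occurrences of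
the pattern `α` in `w` (occurrences of `α` as a suffix are dropped). -/
def followStr (w pat : List Bool) : List Bool :=
  (List.range w.length).filterMap (fun i =>
    if ((w.drop i).take pat.length) = pat then w[(i + pat.length)]? else none)

/-- The unnormalized empirical entropy of a string over `{a, b}`. -/
noncomputable def Hstr (u : List Bool) : ℝ :=
  ∑ x : Bool, (u.count x : ℝ) * Real.logb 2 ((u.length : ℝ) / (u.count x : ℝ))

/-- The `k`-th order (unnormalized) empirical entropy of a string over `{a,b}`:
`H_k(w) = ∑_{α ∈ Σ^k} H(w(α))`. -/
noncomputable def HkStr (k : ℕ) (w : List Bool) : ℝ :=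
  ∑ f : Fin k → Bool, Hstr (followStr w (List.ofFn f))

lemma pow_big : ∀ n : ℕ, n + 2 ≤ 2^(n+2) - 1 := by
  intro n
  induction n with
  | zero => simp
  | succ n ih =>
    have h1 : 1 ≤ 2^(n+2) := Nat.one_le_two_pow
    have h2 : 2^(n+1+2) = 2 * 2^(n+2) := by ring
    omega

lemma S_length : ∀ n, 1 ≤ n → (S n).length = 2^(n+1) - 1 := by
  intro n
  induction n using S.induct with
  | case1 => omega
  | case2 => intro _; rfl
  | case3 n ih =>
    intro _
    have h := ih (by omega)
    have h1 : 1 ≤ 2^n := Nat.one_le_two_pow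
    have e1 : 2^(n+1+1) = 4*2^n := by ring
    have e2 : 2^(n+2+1) = 8*2^n := by ring
    show (true :: (S (n+1) ++ S (n+1))).length = _
    rw [List.length_cons, List.length_append, h]
    omega

lemma S_take : ∀ n m, m ≤ n → (S n).take m = List.replicate m true := by
  intro n
  induction n using S.induct with
  | case1 => intro m hm; interval_cases m; rfl
  | case2 => intro m hm; interval_cases m <;> rfl
  | case3 n ih =>
    intro m hm
    match m with
    | 0 => rfl
    | (m'+1) =>
      have hlen : m' ≤ (S (n+1)).length := by
        have hL := S_length (n+1) (by omega)
        have hb := pow_big n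
        have e1 : 2^(n+1+1) = 2^(n+2) := by ring
        omega
      show (true :: (S (n+1) ++ S (n+1))).take (m'+1) = _
      rw [List.take_succ_cons, List.take_append_of_le_length hlen, ih m' (by omega)]
      rfl

lemma S_getElem?_lt {n j : ℕ} (h : j < n) : (S n)[j]? = some true := by
  have h1 := S_take n n le_rfl
  have : (S n)[j]? = ((S n).take n)[j]? := by
    rw [List.getElem?_take, if_pos h]
  rw [this, h1, List.getElem?_replicate, if_pos h]

lemma S_getElem?_self : ∀ n, 1 ≤ n → (S n)[n]? = some false := by
  intro n
  induction n using S.induct with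
  | case1 => omega
  | case2 => intro _; rfl
  | case3 n ih =>
    intro _
    have h := ih (by omega)
    have hlen : n + 1 < (S (n+1)).length := by
      have hL := S_length (n+1) (by omega)
      have hb := pow_big n
      have e1 : 2^(n+1+1) = 2^(n+2) := by ring
      omega
    show (true :: (S (n+1) ++ S (n+1)))[n+2]? = some false
    rw [List.getElem?_cons_succ, List.getElem?_append, if_pos hlen]
    exact h

lemma S_length_pos : ∀ n, 1 ≤ n → 0 < (S n).length := by
  intro n hn
  have hL := S_length n hn
  have hb : 1 ≤ 2 ^ n := Nat.one_le_two_pow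
  have h2 : 2^(n+1) = 2 * 2^n := by ring
  omega

lemma S_getLast? : ∀ n, 1 ≤ n → (S n)[(S n).length - 1]? = some false := by
  intro n
  induction n using S.induct with
  | case1 => omega
  | case2 => intro _; rfl
  | case3 n ih =>
    intro _
    have h := ih (by omega)
    have hpos : 0 < (S (n+1)).length := S_length_pos (n+1) (by omega)
    show (true :: (S (n+1) ++ S (n+1)))[(true :: (S (n+1) ++ S (n+1))).length - 1]? = some false
    have hl : (true :: (S (n+1) ++ S (n+1))).length - 1 = ((S (n+1)).length + ((S (n+1)).length - 1)) + 1 := by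
      rw [List.length_cons, List.length_append]; omega
    rw [hl, List.getElem?_cons_succ, List.getElem?_append_right (by omega)]
    have he : (S (n+1)).length + ((S (n+1)).length - 1) - (S (n+1)).length = (S (n+1)).length - 1 := by omega
    rw [he]
    exact h
lemma followStr_nil (pat : List Bool) : followStr [] pat = [] := rfl

lemma followStr_cons (x : Bool) (u pat : List Bool) :
    followStr (x :: u) pat =
      (if (x :: u).take pat.length = pat then ((x :: u)[pat.length]?).toList else [])
        ++ followStr u pat := by
  unfold followStr
  rw [List.length_cons, List.range_succ_eq_map, List.filterMap_cons, List.filterMap_map]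
  have h2 : ((fun i => if (((x :: u).drop i).take pat.length) = pat
        then (x :: u)[(i + pat.length)]? else none) ∘ Nat.succ)
      = fun i => (if ((u.drop i).take pat.length) = pat then u[(i + pat.length)]? else none) := by
    funext i
    simp only [Function.comp_apply, List.drop_succ_cons,
      show Nat.succ i + pat.length = (i + pat.length) + 1 from by omega,
      List.getElem?_cons_succ]
  rw [h2]
  simp only [List.drop_zero, Nat.zero_add]
  by_cases hc : (x :: u).take pat.length = pat
  · rw [if_pos hc, if_pos hc]
    cases h : (x :: u)[pat.length]? <;> simp [h]
  · rw [if_neg hc, if_neg hc]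
    simp

lemma followStr_eq_nil {w pat : List Bool}
    (h : ∀ i, ((w.drop i).take pat.length) ≠ pat) : followStr w pat = [] := by
  unfold followStr
  apply List.filterMap_eq_nil_iff.2
  intro i _
  rw [if_neg (h i)]

lemma take_drop_ne {w : List Bool} {i k j : ℕ} (hj : j < k)
    (hne : w[i + j]? ≠ some true) :
    ((w.drop i).take k) ≠ List.replicate k true := by
  intro he
  have h1 : ((w.drop i).take k)[j]? = w[i + j]? := by
    rw [List.getElem?_take, if_pos hj, List.getElem?_drop]
  rw [he, List.getElem?_replicate, if_pos hj] at h1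
  exact hne h1.symm

lemma followStr_append {u v pat : List Bool}
    (h : ∀ i, i < u.length → u.length ≤ i + pat.length →
      (((u ++ v).drop i).take pat.length) ≠ pat) :
    followStr (u ++ v) pat = followStr u pat ++ followStr v pat := by
  unfold followStr
  rw [List.length_append, List.range_add, List.filterMap_append, List.filterMap_map]
  congr 1
  · apply List.filterMap_congr
    intro i hi
    rw [List.mem_range] at hi
    by_cases hile : i + pat.length ≤ u.length
    · rcases lt_or_eq_of_le hile with hlt | heq
      · have hdt : (((u ++ v).drop i).take pat.length) = ((u.drop i).take pat.length) := by
          rw [List.drop_append_of_le_length (le_of_lt hi),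
            List.take_append_of_le_length (by rw [List.length_drop]; omega)]
        rw [hdt]
        by_cases hcu : ((u.drop i).take pat.length) = pat
        · rw [if_pos hcu, if_pos hcu, List.getElem?_append, if_pos (by omega)]
        · rw [if_neg hcu, if_neg hcu]
      · -- i + pat.length = u.length : both none
        have := h i hi (le_of_eq heq.symm)
        rw [if_neg this]
        by_cases hcu : ((u.drop i).take pat.length) = pat
        · rw [if_pos hcu]
          have : u[i + pat.length]? = none := by
            rw [List.getElem?_eq_none_iff]
            omega
          rw [this]
        · rw [if_neg hcu]
    · push_neg at hile
      rw [if_neg (h i hi (by omega))]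
      have : ((u.drop i).take pat.length) ≠ pat := by
        intro hc
        have hl := congrArg List.length hc
        rw [List.length_take, List.length_drop] at hl
        omega
      rw [if_neg this]
  · apply List.filterMap_congr
    intro i _
    simp only [Function.comp_apply]
    have hd : (u ++ v).drop (u.length + i) = v.drop i := List.drop_length_add_append i
    have hg : (u ++ v)[u.length + i + pat.length]? = v[i + pat.length]? := by
      rw [List.getElem?_append_right (by omega)]
      congr 1
      omega
    rw [hd, hg]

/-- The follow strings of `b^k` in `S (k+d)`. -/
def U : ℕ → List Bool
  | 0 => [false]
  | (m+1) => true :: (U m ++ U m)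

lemma S_noBoundary (m k : ℕ) (hm : 1 ≤ m) (hk : 1 ≤ k) :
    ∀ i, i < (S m).length → (S m).length ≤ i + (List.replicate k true).length →
      (((S m ++ S m).drop i).take (List.replicate k true).length) ≠ List.replicate k true := by
  intro i hi hle
  rw [List.length_replicate] at *
  apply take_drop_ne (j := (S m).length - 1 - i) (by omega)
  have he : i + ((S m).length - 1 - i) = (S m).length - 1 := by omega
  rw [he, List.getElem?_append, if_pos (show (S m).length - 1 < (S m).length by omega), S_getLast? m hm]
  simp

lemma take_S_ne {n k : ℕ} (hn : 1 ≤ n) (hk : n < k) :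
    (S n).take k ≠ List.replicate k true := by
  intro h
  have h1 : ((S n).take k)[n]? = (S n)[n]? := by
    rw [List.getElem?_take, if_pos hk]
  rw [h, S_getElem?_self n hn, List.getElem?_replicate, if_pos hk] at h1
  simp at h1

lemma followStr_S_big : ∀ n, ∀ k, n < k → followStr (S n) (List.replicate k true) = [] := by
  intro n
  induction n using S.induct with
  | case1 => intro k hk; rfl
  | case2 =>
    intro k hk
    apply followStr_eq_nil
    intro i
    rw [List.length_replicate]
    show (List.take k (List.drop i [true, false, false])) ≠ _
    rcases i with _ | i
    · exact take_drop_ne (w := [true,false,false]) (i := 0) (j := 1) (by omega) (by decide)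
    rcases i with _ | i
    · exact take_drop_ne (w := [true,false,false]) (i := 1) (j := 0) (by omega) (by decide)
    rcases i with _ | i
    · exact take_drop_ne (w := [true,false,false]) (i := 2) (j := 0) (by omega) (by decide)
    · exact take_drop_ne (w := [true,false,false]) (i := i+3) (j := 0) (by omega)
        (by rw [List.getElem?_eq_none (by simp only [List.length_cons, List.length_nil]; omega)]; simp)
  | case3 n ih =>
    intro k hk
    have hS : S (n+2) = true :: (S (n+1) ++ S (n+1)) := rfl
    rw [hS, followStr_cons, List.length_replicate, ← hS,
      if_neg (take_S_ne (by omega : 1 ≤ n+2) (by omega : n+2 < k)), List.nil_append]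
    rw [followStr_append (S_noBoundary (n+1) k (by omega) (by omega)),
      ih k (by omega)]
    rfl

lemma followStr_S (k : ℕ) (hk : 1 ≤ k) :
    ∀ d, followStr (S (k + d)) (List.replicate k true) = U d := by
  intro d
  induction d with
  | zero =>
    match k, hk with
    | 1, _ => decide
    | (m+2), _ =>
      have hS : S (m+2+0) = true :: (S (m+1) ++ S (m+1)) := rfl
      rw [hS, followStr_cons, List.length_replicate, ← hS,
        if_pos (by rw [show m+2+0 = m+2 from rfl]; exact S_take (m+2) (m+2) le_rfl),
        show m+2+0 = m+2 from rfl,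
        S_getElem?_self (m+2) (by omega),
        followStr_append (S_noBoundary (m+1) (m+2) (by omega) (by omega)),
        followStr_S_big (m+1) (m+2) (by omega)]
      rfl
  | succ d ihd =>
    obtain ⟨p, hp⟩ : ∃ p, k + d = p + 1 := ⟨k + d - 1, by omega⟩
    have hS : S (k + (d+1)) = true :: (S (k + d) ++ S (k + d)) := by
      rw [show k + (d+1) = (k+d) + 1 from rfl, hp]
      rfl
    have hval : (S (k + (d+1)))[k]? = some true := S_getElem?_lt (by omega)
    rw [hS] at hval
    rw [hS, followStr_cons, List.length_replicate, hval,
      if_pos (by rw [← hS]; exact S_take (k+(d+1)) k (by omega)),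
      followStr_append (S_noBoundary (k+d) k (by omega) hk), ihd]
    rfl

lemma U_count_false : ∀ d, (U d).count false = 2^d := by
  intro d
  induction d with
  | zero => rfl
  | succ d ih =>
    show ((true : Bool) :: (U d ++ U d)).count false = _
    rw [List.count_cons, List.count_append, ih]
    simp [pow_succ]; ring

lemma U_count_true : ∀ d, (U d).count true = 2^d - 1 := by
  intro d
  induction d with
  | zero => rfl
  | succ d ih =>
    show ((true : Bool) :: (U d ++ U d)).count true = _
    rw [List.count_cons, List.count_append, ih]
    have : 1 ≤ 2^d := Nat.one_le_two_pow
    simp [pow_succ]; omega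

lemma U_length : ∀ d, (U d).length = 2^(d+1) - 1 := by
  intro d
  induction d with
  | zero => rfl
  | succ d ih =>
    show ((true : Bool) :: (U d ++ U d)).length = _
    rw [List.length_cons, List.length_append, ih]
    have h1 : 1 ≤ 2^(d+1) := Nat.one_le_two_pow
    have h2 : 2^(d+1+1) = 2 * 2^(d+1) := by ring
    omega

lemma Hstr_nonneg (u : List Bool) : 0 ≤ Hstr u := by
  apply Finset.sum_nonneg
  intro x _
  rcases Nat.eq_zero_or_pos (u.count x) with h | h
  · rw [h]; simp
  · apply mul_nonneg (by positivity)
    apply Real.logb_nonneg (by norm_num)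
    rw [le_div_iff₀ (by exact_mod_cast h)]
    have := List.count_le_length (a := x) (l := u)
    push_cast
    simpa using this

lemma Hstr_U (d : ℕ) (hd : 1 ≤ d) : (2:ℝ)^d ≤ Hstr (U d) := by
  have h2d : 1 ≤ 2^d := Nat.one_le_two_pow
  have h2d1 : 1 ≤ 2^(d+1) := Nat.one_le_two_pow
  have hcf : ((U d).count false : ℝ) = 2^d := by
    rw [U_count_false]; push_cast; ring
  have hct : ((U d).count true : ℝ) = 2^d - 1 := by
    rw [U_count_true]; push_cast [h2d]; ring
  have hlen : ((U d).length : ℝ) = 2 * 2^d - 1 := by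
    rw [U_length]; push_cast [h2d1]; ring
  set X : ℝ := 2^d with hX
  have hX2 : (2:ℝ) ≤ X := by
    rw [hX]
    calc (2:ℝ) = 2^1 := by norm_num
    _ ≤ 2^d := by
      apply pow_le_pow_right₀ (by norm_num) hd
  rw [Hstr, Fintype.sum_bool, hcf, hct, hlen]
  have h1 : 1 ≤ Real.logb 2 ((2*X - 1) / (X - 1)) := by
    rw [Real.le_logb_iff_rpow_le (by norm_num) (by apply div_pos <;> linarith),
      Real.rpow_one, le_div_iff₀ (by linarith)]
    linarith
  have h2 : 1/2 ≤ Real.logb 2 ((2*X - 1) / X) := by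
    rw [Real.le_logb_iff_rpow_le (by norm_num) (by apply div_pos <;> linarith)]
    have hs : (2:ℝ)^((1:ℝ)/2) = Real.sqrt 2 := (Real.sqrt_eq_rpow 2).symm
    have h32 : Real.sqrt 2 ≤ 3/2 := by
      nlinarith [Real.sq_sqrt (show (0:ℝ) ≤ 2 by norm_num), Real.sqrt_nonneg 2]
    have hdiv : (3:ℝ)/2 ≤ (2*X - 1) / X := by
      rw [le_div_iff₀ (by linarith)]
      linarith
    rw [hs]
    linarith
  nlinarith [mul_le_mul_of_nonneg_left h1 (show (0:ℝ) ≤ X - 1 by linarith),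
    mul_le_mul_of_nonneg_left h2 (show (0:ℝ) ≤ X by linarith)]
lemma SLP.expand_def {α : Type*} (G : SLP α) (i : Fin G.m) :
    G.expand i = (G.rhs i).flatMap (fun s =>
      match s with
      | Sum.inl j => G.expand j
      | Sum.inr a => [a]) := by
  rw [SLP.expand]
  conv_rhs => rw [← List.attach_map_subtype_val (G.rhs i)]
  rw [List.flatMap_map]
  unfold List.flatMap
  congr 1
  apply List.map_congr_left
  intro x hx
  cases hxv : x.val <;> simp


def Gslp (n : ℕ) : SLP Bool where
  m := n
  rhs := fun i => if h : (i:ℕ) = n - 1 then [Sum.inr true, Sum.inr false, Sum.inr false]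
    else [Sum.inr true, Sum.inl ⟨(i:ℕ)+1, by have := i.isLt; omega⟩,
          Sum.inl ⟨(i:ℕ)+1, by have := i.isLt; omega⟩]
  wf := by
    intro i j hj
    split at hj
    · simp at hj
    · simp at hj
      rcases hj with rfl | rfl <;> simp

lemma Gslp_size (n : ℕ) : (Gslp n).size = 3 * n := by
  unfold SLP.size
  have : ∀ i : Fin (Gslp n).m, ((Gslp n).rhs i).length = 3 := by
    intro i
    show (dite _ _ _ : List _).length = 3
    by_cases h : (i:ℕ) = n - 1
    · exact congrArg List.length (dif_pos h)
    · exact congrArg List.length (dif_neg h)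
  rw [Finset.sum_congr rfl (fun i _ => this i)]
  simp [Finset.card_univ]
  show n * 3 = 3 * n
  ring

lemma Gslp_expand (n : ℕ) (hn : 1 ≤ n) :
    ∀ t, 1 ≤ t → ∀ i : Fin (Gslp n).m, n - (i:ℕ) = t → (Gslp n).expand i = S t := by
  intro t
  induction t using Nat.strong_induction_on with
  | _ t ih =>
  intro ht i hit
  have hm : (Gslp n).m = n := rfl
  have him : (i:ℕ) < n := i.isLt
  rw [SLP.expand_def]
  by_cases h1 : (i:ℕ) = n - 1
  · have ht1 : t = 1 := by omega
    have : (Gslp n).rhs i = [Sum.inr true, Sum.inr false, Sum.inr false] := by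
      show dite _ _ _ = _
      exact dif_pos h1
    rw [this, ht1]
    rfl
  · have : (Gslp n).rhs i = [Sum.inr true, Sum.inl ⟨(i:ℕ)+1, by omega⟩,
        Sum.inl ⟨(i:ℕ)+1, by omega⟩] := by
      show dite _ _ _ = _
      exact dif_neg h1
    rw [this]
    have ht2 : 2 ≤ t := by omega
    have hrec : (Gslp n).expand ⟨(i:ℕ)+1, by omega⟩ = S (t-1) :=
      ih (t-1) (by omega) (by omega) _ (by simp; omega)
    simp only [List.flatMap_cons, List.flatMap_nil, List.append_nil, hrec]
    obtain ⟨s, hs⟩ : ∃ s, t = s + 2 := ⟨t - 2, by omega⟩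
    rw [hs]
    show [true] ++ (S (s+1) ++ S (s+1)) = true :: (S (s+1) ++ S (s+1))
    rfl
/-- For every `1 ≤ k < n`, the `k`-th order empirical entropy of `S n`
satisfies `H_k(S n) ≥ 2^(n−k)`, although there is a straight-line program of
size `3n` generating `S n`. -/
theorem HkStr_S_lower_bound (n k : ℕ) (hk : 1 ≤ k) (hkn : k < n) :
    2 ^ (n - k) ≤ HkStr k (S n) ∧
      ∃ (G : SLP Bool) (h : 0 < G.m), G.size = 3 * n ∧ G.expand ⟨0, h⟩ = S n := by
  have hn1 : 1 ≤ n := by omega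
  constructor
  · set d := n - k with hd
    have hd1 : 1 ≤ d := by omega
    have hnk : n = k + d := by omega
    have hterm : Hstr (followStr (S n) (List.ofFn (fun _ : Fin k => true))) = Hstr (U d) := by
      rw [List.ofFn_const, hnk, followStr_S k hk d]
    have hle : Hstr (followStr (S n) (List.ofFn (fun _ : Fin k => true))) ≤ HkStr k (S n) := by
      rw [HkStr]
      exact Finset.single_le_sum (f := fun f : Fin k → Bool => Hstr (followStr (S n) (List.ofFn f)))
        (fun f _ => Hstr_nonneg _) (Finset.mem_univ _)
    calc (2:ℝ)^(n-k) = (2:ℝ)^d := rfl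
    _ ≤ Hstr (U d) := Hstr_U d hd1
    _ = Hstr (followStr (S n) (List.ofFn (fun _ : Fin k => true))) := hterm.symm
    _ ≤ HkStr k (S n) := hle
  · refine ⟨Gslp n, by show 0 < n; omega, Gslp_size n, ?_⟩
    exact Gslp_expand n hn1 n hn1 ⟨0, by show 0 < n; omega⟩ (by simp)
end
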